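/- arXiv:2206.09884 — 6 statements merged into one kernel-verified Lean document; each statement's English description precedes it below -/
import Mathlib

section
/- Let G be a finite simple graph, let 𝔛 be a set of descriptions for G, and let X₁, X₂ ⊆ V(G) be vertex sets disjoint from the set ⋃_{(r,𝒳)∈𝔛} ({r} ∪ ⋃_{X∈𝒳} X). Assume that for every (r,𝒳) ∈ 𝔛, each of the pairs (r, 𝒳 ∪ {X₁ ∪ X₂}), (r, 𝒳 ∪ {X₁}), and (r, 𝒳 ∪ {X₂}) is a description for G. Then 𝒯_G({(r, 𝒳 ∪ {X₁ ∪ X₂}) : (r,𝒳) ∈ 𝔛}) = 𝒯_G({(r, 𝒳 ∪ {X₁}) : (r,𝒳) ∈ 𝔛}) ∪ 𝒯_G({(r, 𝒳 ∪ {X₂}) : (r,𝒳) ∈ 𝔛}). -/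
namespace Secluded

open SimpleGraph

variable {V : Type*}

/-- The open neighborhood of a vertex set `S`: vertices outside `S` with a neighbor in `S`. -/
def openNbhd (G : SimpleGraph V) (S : Set V) : Set V :=
  {v | v ∉ S ∧ ∃ u ∈ S, G.Adj v u}

/-- The graph obtained from `G` by deleting the vertices in `D`
(kept on the same vertex type; deleted vertices become isolated). -/
def gdelete (G : SimpleGraph V) (D : Set V) : SimpleGraph V where
  Adj x y := G.Adj x y ∧ x ∉ D ∧ y ∉ D
  symm := ⟨fun _ _ h => ⟨h.1.symm, h.2.2, h.2.1⟩⟩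
  loopless := ⟨fun x h => G.loopless.irrefl x h.1⟩

/-- `S` induces a tree (connected and acyclic induced subgraph) in `G`. -/
def IsInducedTree (G : SimpleGraph V) (S : Set V) : Prop :=
  (G.induce S).IsTree

/-- `S` is a `k`-secluded tree in `G`. -/
def IsSecludedTree (G : SimpleGraph V) (k : ℕ) (S : Set V) : Prop :=
  IsInducedTree G S ∧ (openNbhd G S).ncard ≤ k

/-- The set of `k`-secluded supertrees of `F` in `G`. -/
def secl (G : SimpleGraph V) (k : ℕ) (F : Set V) : Set (Set V) :=
  {S | IsSecludedTree G k S ∧ F ⊆ S}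

/-- Total weight of a vertex set. -/
noncomputable def weight (w : V → ℕ) (S : Set V) : ℕ := ∑ᶠ x ∈ S, w x

/-- The maximum-weight elements of a collection of vertex sets. -/
def maxset (w : V → ℕ) (X : Set (Set V)) : Set (Set V) :=
  {S | S ∈ X ∧ ∀ S' ∈ X, weight w S' ≤ weight w S}

/-- `S` consists of exactly one vertex from each member of `𝒳`. -/
def IsTransversal (𝒳 : Set (Set V)) (S : Set V) : Prop :=
  S ⊆ ⋃₀ 𝒳 ∧ ∀ X ∈ 𝒳, (S ∩ X).ncard = 1

/-- The vertex set of the connected component of `G − S` containing `r`. -/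
def component (G : SimpleGraph V) (S : Set V) (r : V) : Set V :=
  {x | (gdelete G S).Reachable r x}

/-- `(r, 𝒳)` is a description for `G`. -/
def IsDescription (G : SimpleGraph V) (r : V) (𝒳 : Set (Set V)) : Prop :=
  (∀ X ∈ 𝒳, r ∉ X) ∧ 𝒳.Pairwise Disjoint ∧
    ∀ S : Set V, IsTransversal 𝒳 S →
      (G.induce (component G S r)).IsAcyclic ∧ openNbhd G (component G S r) = S

/-- The induced tree (given by its vertex set `C`) is described by the description `D`. -/
def Describes (G : SimpleGraph V) (D : V × Set (Set V)) (C : Set V) : Prop :=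
  D.1 ∈ C ∧ IsTransversal D.2 (openNbhd G C)

/-- `𝒯_G(𝔛)`: the set of induced trees of `G` described by some member of `𝔛`. -/
def treesOf (G : SimpleGraph V) (𝔛 : Set (V × Set (Set V))) : Set (Set V) :=
  {C | IsInducedTree G C ∧ ∃ D ∈ 𝔛, Describes G D C}

/-- No induced tree of `G` is described by two distinct members of `𝔛`. -/
def NonRedundant (G : SimpleGraph V) (𝔛 : Set (V × Set (Set V))) : Prop :=
  ∀ C : Set V, IsInducedTree G C → ∀ D₁ ∈ 𝔛, ∀ D₂ ∈ 𝔛,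
    Describes G D₁ C → Describes G D₂ C → D₁ = D₂

/-- Degree of a vertex. -/
noncomputable def degOf (G : SimpleGraph V) (v : V) : ℕ := (G.neighborSet v).ncard


lemma transversal_mono_part (𝒳 : Set (Set V)) (X₁ X₂ S : Set V)
    (h2 : Disjoint X₂ (⋃₀ 𝒳)) (hT : IsTransversal (𝒳 ∪ {X₁}) S) :
    IsTransversal (𝒳 ∪ {X₁ ∪ X₂}) S := by
  obtain ⟨hsub, hcard⟩ := hT
  have e1 : ⋃₀ (𝒳 ∪ {X₁}) = ⋃₀ 𝒳 ∪ X₁ := by simp [Set.sUnion_union, Set.union_comm]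
  have e12 : ⋃₀ (𝒳 ∪ {X₁ ∪ X₂}) = ⋃₀ 𝒳 ∪ (X₁ ∪ X₂) := by simp [Set.sUnion_union, Set.union_comm]
  have hsub' : S ⊆ ⋃₀ 𝒳 ∪ X₁ := e1 ▸ hsub
  have hkey : S ∩ (X₁ ∪ X₂) = S ∩ X₁ := by
    apply subset_antisymm
    · rintro y ⟨hyS, hy12⟩
      refine ⟨hyS, ?_⟩
      rcases hy12 with hy1 | hy2
      · exact hy1
      · rcases hsub' hyS with hyU | hy1
        · exact absurd hyU (h2.le_bot ⟨hy2, hyU⟩).elim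
        · exact hy1
    · exact Set.inter_subset_inter_right S Set.subset_union_left
  constructor
  · intro y hy
    rw [e12]
    rcases hsub' hy with hyU | hy1
    · exact Or.inl hyU
    · exact Or.inr (Or.inl hy1)
  · rintro Y (hY | hY)
    · exact hcard Y (Or.inl hY)
    · rw [Set.mem_singleton_iff] at hY
      rw [hY, hkey]
      exact hcard X₁ (Or.inr rfl)

lemma transversal_split (𝒳 : Set (Set V)) (X₁ X₂ S : Set V)
    (hT : IsTransversal (𝒳 ∪ {X₁ ∪ X₂}) S) :
    IsTransversal (𝒳 ∪ {X₁}) S ∨ IsTransversal (𝒳 ∪ {X₂}) S := by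
  obtain ⟨hsub, hcard⟩ := hT
  obtain ⟨x, hx⟩ := Set.ncard_eq_one.mp (hcard (X₁ ∪ X₂) (Or.inr rfl))
  have hxS : x ∈ S ∧ x ∈ X₁ ∪ X₂ := by
    have : x ∈ S ∩ (X₁ ∪ X₂) := hx ▸ rfl
    exact this
  have e12 : ⋃₀ (𝒳 ∪ {X₁ ∪ X₂}) = ⋃₀ 𝒳 ∪ (X₁ ∪ X₂) := by simp [Set.sUnion_union, Set.union_comm]
  have hsub' : S ⊆ ⋃₀ 𝒳 ∪ (X₁ ∪ X₂) := e12 ▸ hsub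
  have key : ∀ Z W : Set V, X₁ ∪ X₂ = Z ∪ W → x ∈ Z →
      IsTransversal (𝒳 ∪ {Z}) S := by
    intro Z W hZW hxZ
    have eZ : ⋃₀ (𝒳 ∪ {Z}) = ⋃₀ 𝒳 ∪ Z := by simp [Set.sUnion_union, Set.union_comm]
    constructor
    · intro y hy
      rw [eZ]
      rcases hsub' hy with hyU | hy12
      · exact Or.inl hyU
      · have : y ∈ S ∩ (X₁ ∪ X₂) := ⟨hy, hy12⟩
        rw [hx, Set.mem_singleton_iff] at this
        subst this
        exact Or.inr hxZ
    · rintro Y (hY | hY)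
      · exact hcard Y (Or.inl hY)
      · rw [Set.mem_singleton_iff] at hY
        subst hY
        rw [Set.ncard_eq_one]
        refine ⟨x, subset_antisymm ?_ ?_⟩
        · intro y hy
          have : y ∈ S ∩ (X₁ ∪ X₂) := ⟨hy.1, hZW ▸ Or.inl hy.2⟩
          rw [hx] at this; exact this
        · rintro y rfl; exact ⟨hxS.1, hxZ⟩
  rcases hxS.2 with hx1 | hx2
  · exact Or.inl (key X₁ X₂ rfl hx1)
  · exact Or.inr (key X₂ X₁ (Set.union_comm X₁ X₂) hx2)

/-- Merging two extra parts `X₁`, `X₂` (disjoint from everything appearing in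
the descriptions of `𝔛`): the trees described after adding the part `X₁ ∪ X₂` are exactly
those described after adding `X₁` together with those described after adding `X₂`. -/
theorem treesOf_union_part [Fintype V] (G : SimpleGraph V)
    (𝔛 : Set (V × Set (Set V))) (X₁ X₂ : Set V)
    (hdesc : ∀ D ∈ 𝔛, IsDescription G D.1 D.2)
    (hdisj₁ : ∀ D ∈ 𝔛, Disjoint X₁ ({D.1} ∪ ⋃₀ D.2))
    (hdisj₂ : ∀ D ∈ 𝔛, Disjoint X₂ ({D.1} ∪ ⋃₀ D.2))
    (h12 : ∀ D ∈ 𝔛, IsDescription G D.1 (D.2 ∪ {X₁ ∪ X₂}))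
    (h1 : ∀ D ∈ 𝔛, IsDescription G D.1 (D.2 ∪ {X₁}))
    (h2 : ∀ D ∈ 𝔛, IsDescription G D.1 (D.2 ∪ {X₂})) :
    treesOf G {E | ∃ D ∈ 𝔛, E = (D.1, D.2 ∪ {X₁ ∪ X₂})} =
      treesOf G {E | ∃ D ∈ 𝔛, E = (D.1, D.2 ∪ {X₁})} ∪
        treesOf G {E | ∃ D ∈ 𝔛, E = (D.1, D.2 ∪ {X₂})} := by
  ext C
  simp only [treesOf, Set.mem_union, Set.mem_setOf_eq]
  constructor
  · rintro ⟨hT, E, ⟨D, hD, rfl⟩, hr, htr⟩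
    rcases transversal_split D.2 X₁ X₂ _ htr with h | h
    · exact Or.inl ⟨hT, (D.1, D.2 ∪ {X₁}), ⟨D, hD, rfl⟩, hr, h⟩
    · exact Or.inr ⟨hT, (D.1, D.2 ∪ {X₂}), ⟨D, hD, rfl⟩, hr, h⟩
  · rintro (⟨hT, E, ⟨D, hD, rfl⟩, hr, htr⟩ | ⟨hT, E, ⟨D, hD, rfl⟩, hr, htr⟩)
    · refine ⟨hT, (D.1, D.2 ∪ {X₁ ∪ X₂}), ⟨D, hD, rfl⟩, hr, ?_⟩
      exact transversal_mono_part D.2 X₁ X₂ _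
        ((hdisj₂ D hD).mono_right Set.subset_union_right) htr
    · have htr' := transversal_mono_part D.2 X₂ X₁ _
        ((hdisj₁ D hD).mono_right Set.subset_union_right) htr
      rw [Set.union_comm X₂ X₁] at htr'
      exact ⟨hT, (D.1, D.2 ∪ {X₁ ∪ X₂}), ⟨D, hD, rfl⟩, hr, htr'⟩

end Secluded
end

section
/- Let G be a finite simple graph with a weight function w : V(G) → ℕ assigning a positive weight to every vertex, let k ≥ 0 be an integer, and let F ⊆ V(G) be a nonempty vertex set. Suppose G contains a degree-1 vertex v with F ≠ {v}, and let u be the unique neighbor of v. Define w' on V(G−v) by w'(u) = w(u) + w(v) and w'(x) = w(x) for x ≠ u, and define F' = (F \ {v}) ∪ {u} if v ∈ F and F' = F otherwise. If 𝔛 is a non-redundant set of descriptions for G − v such that 𝒯_{G−v}(𝔛) = maxset_{w'}(secl_{G−v}^{k}(F')), then 𝔛 is a non-redundant set of descriptions for G such that 𝒯_G(𝔛) = maxset_w(secl_G^{k}(F)). -/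
namespace Secluded

open SimpleGraph

variable {V : Type*}

section Helpers
open Walk

lemma exists_last_edge {H : SimpleGraph V} {x y : V} (p : H.Walk x y) (hne : x ≠ y) :
    ∃ z, H.Adj z y ∧ s(z, y) ∈ p.edges := by
  induction p with
  | nil => exact absurd rfl hne
  | @cons a b c h q ih =>
    by_cases hb : b = c
    · subst hb; exact ⟨a, h, by simp⟩
    · obtain ⟨z, hz, hze⟩ := ih hb
      exact ⟨z, hz, by simp [hze]⟩

lemma exists_first_edge {H : SimpleGraph V} {x y : V} (p : H.Walk x y) (hne : x ≠ y) :
    ∃ z, H.Adj x z ∧ s(x, z) ∈ p.edges := by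
  cases p with
  | nil => exact absurd rfl hne
  | cons h q => exact ⟨_, h, by simp⟩

lemma pendant_not_mem_path_support {H : SimpleGraph V} {v u : V}
    (hv : ∀ z, H.Adj v z → z = u) {x y : V} {p : H.Walk x y} (hp : p.IsPath)
    (hx : x ≠ v) (hy : y ≠ v) : v ∉ p.support := by
  haveI := Classical.decEq V
  intro hmem
  have hspec := p.take_spec hmem
  obtain ⟨z, hz, hze⟩ := exists_last_edge (p.takeUntil v hmem) hx
  obtain ⟨z', hz', hze'⟩ := exists_first_edge (p.dropUntil v hmem) (Ne.symm hy)
  have hzu : z = u := hv z hz.symm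
  have hz'u : z' = u := hv z' hz'
  subst hzu hz'u
  have hnodup : (p.edges).Nodup := hp.isTrail.edges_nodup
  rw [← hspec, edges_append] at hnodup
  exact (List.disjoint_of_nodup_append hnodup) hze (by rwa [Sym2.eq_swap] at hze')

lemma pendant_not_mem_cycle_support {H : SimpleGraph V} {v u : V}
    (hv : ∀ z, H.Adj v z → z = u) {x : V} {c : H.Walk x x} (hc : c.IsCycle) :
    v ∉ c.support := by
  haveI := Classical.decEq V
  intro hmem
  suffices aux : ∀ (c' : H.Walk v v), ¬ c'.IsCycle from aux _ (hc.rotate hmem)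
  intro c' hc'
  cases c' with
  | nil => exact hc'.ne_nil rfl
  | @cons _ b _ h q =>
    have hbu : b = u := hv b h
    obtain ⟨z, hz, hze⟩ := exists_last_edge q h.ne'
    have hzu : z = u := hv z hz.symm
    have hnodup : (Walk.cons h q).edges.Nodup := hc'.isTrail.edges_nodup
    simp only [edges_cons, List.nodup_cons] at hnodup
    refine hnodup.1 ?_
    have heq : s(v, b) = s(z, v) := by rw [hbu, ← hzu, Sym2.eq_swap]
    rw [heq]
    exact hze

/-! ### Lifting walks into induced subgraphs -/

def liftW (H : SimpleGraph V) (S : Set V) :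
    ∀ {x y : V} (p : H.Walk x y) (hp : ∀ z ∈ p.support, z ∈ S),
      (H.induce S).Walk ⟨x, hp x p.start_mem_support⟩ ⟨y, hp y p.end_mem_support⟩
  | _, _, Walk.nil, _ => Walk.nil
  | _, _, Walk.cons h q, hp =>
      Walk.cons (by exact h) (liftW H S q (fun z hz => hp z (by simp [hz])))

lemma liftW_support (H : SimpleGraph V) (S : Set V) {x y : V} (p : H.Walk x y)
    (hp : ∀ z ∈ p.support, z ∈ S) :
    (liftW H S p hp).support.map Subtype.val = p.support := by
  induction p with
  | nil => simp [liftW]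
  | @cons a b c h q ih => simp only [liftW]; exact congrArg (a :: ·) (ih _)

lemma liftW_edges (H : SimpleGraph V) (S : Set V) {x y : V} (p : H.Walk x y)
    (hp : ∀ z ∈ p.support, z ∈ S) :
    (liftW H S p hp).edges.map (Sym2.map Subtype.val) = p.edges := by
  induction p with
  | nil => simp [liftW]
  | @cons a b c h q ih => simp only [liftW]; exact congrArg (s(a, b) :: ·) (ih _)

lemma liftW_length (H : SimpleGraph V) (S : Set V) {x y : V} (p : H.Walk x y)
    (hp : ∀ z ∈ p.support, z ∈ S) : (liftW H S p hp).length = p.length := by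
  induction p with
  | nil => simp [liftW]
  | @cons a b c h q ih => simp only [liftW]; exact congrArg (· + 1) (ih _)

lemma liftW_reachable (H : SimpleGraph V) (S : Set V) {x y : V} (p : H.Walk x y)
    (hp : ∀ z ∈ p.support, z ∈ S) (hx : x ∈ S) (hy : y ∈ S) :
    (H.induce S).Reachable ⟨x, hx⟩ ⟨y, hy⟩ :=
  ⟨liftW H S p hp⟩

lemma liftW_isCycle (H : SimpleGraph V) (S : Set V) {x : V} (c : H.Walk x x)
    (hc : c.IsCycle) (hp : ∀ z ∈ c.support, z ∈ S) : (liftW H S c hp).IsCycle := by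
  refine ⟨⟨⟨?_⟩, ?_⟩, ?_⟩
  · have := hc.isTrail.edges_nodup
    rw [← liftW_edges H S c hp] at this
    exact this.of_map _
  · intro hnil
    have h3 := hc.three_le_length
    have : (liftW H S c hp).length = 0 := by rw [hnil]; rfl
    rw [liftW_length] at this
    omega
  · have := hc.support_nodup
    rw [← liftW_support H S c hp, ← List.map_tail] at this
    exact this.of_map _

/-! ### Pendant vertex and induced subgraphs -/

variable {H : SimpleGraph V} {v u : V}

/-- Push a cycle of an induced subgraph up to a cycle of the ambient graph. -/
lemma induce_cycle_up {S : Set V} {x : ↥S} {c : (H.induce S).Walk x x} (hc : c.IsCycle) :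
    ∃ (c' : H.Walk (x : V) (x : V)), c'.IsCycle ∧ ∀ z ∈ c'.support, z ∈ S := by
  refine ⟨c.map (Embedding.induce S).toHom, hc.map Subtype.val_injective, ?_⟩
  intro z hz
  replace hz : z ∈ c.support.map (Embedding.induce (G := H) S).toHom := by
    rw [← Walk.support_map]; exact hz
  obtain ⟨⟨z', hz'⟩, _, rfl⟩ := List.mem_map.mp hz
  exact hz'

lemma master_acyclic (hv : ∀ z, H.Adj v z → z = u) {S : Set V} (hvS : v ∉ S) :
    (H.induce (insert v S)).IsAcyclic ↔ (H.induce S).IsAcyclic := by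
  constructor
  · intro hbig x c hc
    obtain ⟨c', hc', hsupp⟩ := induce_cycle_up hc
    have hsupp' : ∀ z ∈ c'.support, z ∈ insert v S := fun z hz => Set.mem_insert_of_mem _ (hsupp z hz)
    exact hbig (liftW H _ c' hsupp') (liftW_isCycle H _ c' hc' hsupp')
  · intro hsmall x c hc
    obtain ⟨c', hc', hsupp⟩ := induce_cycle_up hc
    have hvsupp : v ∉ c'.support := pendant_not_mem_cycle_support hv hc'
    have hsupp' : ∀ z ∈ c'.support, z ∈ S := by
      intro z hz
      rcases hsupp z hz with h | h
      · exact absurd (h ▸ hz) hvsupp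
      · exact h
    exact hsmall (liftW H _ c' hsupp') (liftW_isCycle H _ c' hc' hsupp')

lemma master_connected (hv : ∀ z, H.Adj v z → z = u) {S : Set V} (hvS : v ∉ S)
    (huS : u ∈ S) (hadj : H.Adj v u) :
    (H.induce (insert v S)).Connected ↔ (H.induce S).Connected := by
  have hvu : v ≠ u := hadj.ne
  constructor
  · intro hbig
    rw [connected_iff]
    refine ⟨?_, ⟨⟨u, huS⟩⟩⟩
    haveI := Classical.decEq ↥(insert v S)
    intro x y
    obtain ⟨w⟩ := hbig.preconnected ⟨x.1, Set.mem_insert_of_mem _ x.2⟩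
      ⟨y.1, Set.mem_insert_of_mem _ y.2⟩
    set p := w.toPath.1 with hp
    have hpp : p.IsPath := w.toPath.2
    have hvp : (⟨v, Set.mem_insert _ _⟩ : ↥(insert v S)) ∉ p.support := by
      refine pendant_not_mem_path_support (u := ⟨u, Set.mem_insert_of_mem _ huS⟩) ?_ hpp ?_ ?_
      · rintro ⟨z, hz⟩ hadj'
        exact Subtype.ext (hv z hadj')
      · intro h
        have hx : (x : V) = v := congrArg Subtype.val h
        exact hvS (hx ▸ x.2)
      · intro h
        have hy : (y : V) = v := congrArg Subtype.val h
        exact hvS (hy ▸ y.2)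
    -- map up then down
    have hsupp : ∀ z ∈ (p.map (Embedding.induce (insert v S)).toHom).support, z ∈ S := by
      intro z hz
      rw [Walk.support_map] at hz
      obtain ⟨⟨z', hz'⟩, hz'', rfl⟩ := List.mem_map.mp hz
      rcases hz' with h | h
      · exact absurd (by simpa [h] using hz'' : (⟨v, _⟩ : ↥(insert v S)) ∈ p.support) (by
          convert hvp using 2)
      · exact h
    have := liftW_reachable H S _ hsupp x.2 y.2
    simpa using this
  · intro hsmall
    rw [connected_iff]
    refine ⟨?_, ⟨⟨v, Set.mem_insert _ _⟩⟩⟩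
    have key : ∀ x : ↥(insert v S), (H.induce (insert v S)).Reachable x
        ⟨u, Set.mem_insert_of_mem _ huS⟩ := by
      rintro ⟨x, hx⟩
      by_cases hxv : x = v
      · have hadj' : H.Adj x u := by rw [hxv]; exact hadj
        exact (show (H.induce (insert v S)).Adj ⟨x, hx⟩
          ⟨u, Set.mem_insert_of_mem _ huS⟩ from hadj').reachable
      · have h : x ∈ S := hx.resolve_left hxv
        obtain ⟨w⟩ := hsmall.preconnected ⟨x, h⟩ ⟨u, huS⟩
        have hsupp : ∀ z ∈ (w.map (Embedding.induce S).toHom).support, z ∈ insert v S := by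
          intro z hz
          rw [Walk.support_map] at hz
          obtain ⟨⟨z', hz'⟩, _, rfl⟩ := List.mem_map.mp hz
          exact Set.mem_insert_of_mem _ hz'
        have := liftW_reachable H (insert v S) _ hsupp (Set.mem_insert_of_mem _ h)
          (Set.mem_insert_of_mem _ huS)
        simpa using this
    intro x y
    exact (key x).trans (key y).symm

/-! ### gdelete and openNbhd basics -/

variable {G : SimpleGraph V}

lemma gdelete_adj' {D : Set V} {x y : V} :
    (gdelete G D).Adj x y ↔ G.Adj x y ∧ x ∉ D ∧ y ∉ D := Iff.rfl

lemma gdelete_le (G : SimpleGraph V) (D : Set V) : gdelete G D ≤ G := by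
  intro x y h; exact h.1

lemma gdelete_gdelete (G : SimpleGraph V) (A B : Set V) :
    gdelete (gdelete G A) B = gdelete G (A ∪ B) := by
  ext x y
  simp only [gdelete_adj', Set.mem_union]
  tauto

lemma induce_gdelete (G : SimpleGraph V) {D T : Set V} (h : ∀ x ∈ T, x ∉ D) :
    (gdelete G D).induce T = G.induce T := by
  ext a b
  simp only [comap_adj, Function.Embedding.coe_subtype, gdelete_adj']
  exact ⟨fun hh => hh.1, fun hh => ⟨hh, h a.1 a.2, h b.1 b.2⟩⟩

lemma mem_openNbhd {S : Set V} {x : V} :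
    x ∈ openNbhd G S ↔ x ∉ S ∧ ∃ y ∈ S, G.Adj x y := Iff.rfl

lemma openNbhd_mono_graph {G' : SimpleGraph V} (h : G' ≤ G) (S : Set V) :
    openNbhd G' S ⊆ openNbhd G S := by
  rintro x ⟨hx, y, hy, hadj⟩
  exact ⟨hx, y, hy, h hadj⟩

lemma openNbhd_gdelete_single {v : V} {S : Set V} (hvS : v ∉ S) :
    openNbhd (gdelete G {v}) S = openNbhd G S \ {v} := by
  ext x
  simp only [mem_openNbhd, gdelete_adj', Set.mem_diff, Set.mem_singleton_iff]
  constructor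
  · rintro ⟨hx, y, hy, hadj, hxv, hyv⟩
    exact ⟨⟨hx, y, hy, hadj⟩, by simpa using hxv⟩
  · rintro ⟨⟨hx, y, hy, hadj⟩, hxv⟩
    have hyv : y ≠ v := by rintro rfl; exact hvS hy
    exact ⟨hx, y, hy, hadj, by simpa using hxv, by simpa using hyv⟩

lemma openNbhd_insert_pendant {v u : V} {S : Set V} (hv : ∀ z, G.Adj v z → z = u)
    (huS : u ∈ S) (hvS : v ∉ S) :
    openNbhd G (insert v S) = openNbhd G S \ {v} := by
  ext x
  simp only [mem_openNbhd, Set.mem_diff, Set.mem_insert_iff, Set.mem_singleton_iff]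
  constructor
  · rintro ⟨hx, y, (rfl | hy), hadj⟩
    · exact absurd ((hv x hadj.symm) ▸ huS) (fun hh => hx (Or.inr hh))
    · exact ⟨⟨fun hh => hx (Or.inr hh), y, hy, hadj⟩, fun hh => hx (Or.inl hh)⟩
  · rintro ⟨⟨hx, y, hy, hadj⟩, hxv⟩
    exact ⟨by rintro (rfl | hh); exact hxv rfl; exact hx hh, y, Or.inr hy, hadj⟩

lemma not_mem_openNbhd_of_pendant {v u : V} {S : Set V} (hv : ∀ z, G.Adj v z → z = u)
    (huS : u ∉ S) : v ∉ openNbhd G S := by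
  rintro ⟨hvS, y, hy, hadj⟩
  exact huS ((hv y hadj) ▸ hy)

lemma openNbhd_eq_gdelete_of_not_mem {v u : V} {S : Set V} (hv : ∀ z, G.Adj v z → z = u)
    (hvS : v ∉ S) (huS : u ∉ S) : openNbhd (gdelete G {v}) S = openNbhd G S := by
  rw [openNbhd_gdelete_single hvS]
  rw [Set.diff_singleton_eq_self (not_mem_openNbhd_of_pendant hv huS)]

lemma mem_openNbhd_pendant {v u : V} {S : Set V} (hadj : G.Adj v u)
    (hvS : v ∉ S) (huS : u ∈ S) : v ∈ openNbhd G S :=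
  ⟨hvS, u, huS, hadj⟩

/-- K3 third case: `v ∈ S`, `u ∈ S`. -/
lemma openNbhd_pendant_mem {v u : V} {S : Set V} (hv : ∀ z, G.Adj v z → z = u)
    (hvS : v ∈ S) (huS : u ∈ S) (hvu : v ≠ u) :
    openNbhd G S = openNbhd (gdelete G {v}) (S \ {v}) := by
  have h1 : v ∉ S \ {v} := by simp
  have h2 : u ∈ S \ {v} := ⟨huS, by simpa using hvu.symm⟩
  rw [openNbhd_gdelete_single h1, ← openNbhd_insert_pendant hv h2 h1,
    Set.insert_diff_singleton, Set.insert_eq_self.mpr hvS]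

/-! ### Tree transfer -/

lemma isInducedTree_insert_pendant {v u : V} {S : Set V} (hv : ∀ z, G.Adj v z → z = u)
    (hadj : G.Adj v u) (hvS : v ∉ S) (huS : u ∈ S) :
    IsInducedTree G (insert v S) ↔ IsInducedTree G S := by
  unfold IsInducedTree
  rw [isTree_iff, isTree_iff, master_acyclic hv hvS, master_connected hv hvS huS hadj]

lemma isInducedTree_gdelete {v : V} {S : Set V} (hvS : v ∉ S) :
    IsInducedTree (gdelete G {v}) S ↔ IsInducedTree G S := by
  unfold IsInducedTree
  rw [induce_gdelete G (fun x hx => by rintro rfl; exact hvS hx : ∀ x ∈ S, x ∉ ({v} : Set V))]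

lemma mem_of_inducedTree_pendant {v u : V} {C : Set V} (hv : ∀ z, G.Adj v z → z = u)
    (ht : IsInducedTree G C) (hvC : v ∈ C) {x : V} (hxC : x ∈ C) (hxv : x ≠ v) : u ∈ C := by
  obtain ⟨w⟩ := ht.isConnected.preconnected (⟨v, hvC⟩ : ↥C) ⟨x, hxC⟩
  obtain ⟨z, hz, -⟩ := exists_first_edge w (by simpa using hxv.symm)
  have : G.Adj v z.1 := hz
  exact (hv z.1 this) ▸ z.2

/-! ### Reachability and components around a pendant vertex -/

lemma transfer_reachable_of_not_mem_support {H : SimpleGraph V} {v : V} {a b : V}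
    (q : H.Walk a b) (hvq : v ∉ q.support) : (gdelete H {v}).Reachable a b := by
  have hsub : ∀ e ∈ q.edges, e ∈ (gdelete H {v}).edgeSet := by
    intro e he
    induction e with
    | _ c d =>
      have hadj : H.Adj c d := q.adj_of_mem_edges he
      have hc : c ∈ q.support := q.fst_mem_support_of_mem_edges he
      have hd : d ∈ q.support := q.snd_mem_support_of_mem_edges he
      rw [SimpleGraph.mem_edgeSet]
      exact ⟨hadj, by simp only [Set.mem_singleton_iff]; rintro rfl; exact hvq hc,
        by simp only [Set.mem_singleton_iff]; rintro rfl; exact hvq hd⟩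
  exact (q.transfer _ hsub).reachable

lemma not_reachable_no_edge {H : SimpleGraph V} {r x : V} (h : ∀ z, ¬ H.Adj z x)
    (hr : r ≠ x) : ¬ H.Reachable r x := by
  rintro ⟨w⟩
  obtain ⟨z, hz, -⟩ := exists_last_edge w hr
  exact h z hz

lemma reach_avoid {H : SimpleGraph V} {v u : V} (hv : ∀ z, H.Adj v z → z = u)
    {x : V} (hx : x ≠ v) (hr : H.Reachable v x) :
    H.Adj v u ∧ (gdelete H {v}).Reachable u x := by
  haveI := Classical.decEq V
  obtain ⟨w⟩ := hr
  have hpp : (w.toPath.1).IsPath := w.toPath.2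
  revert hpp
  generalize (w.toPath.1 : H.Walk v x) = p
  intro hpp
  cases p with
  | nil => exact absurd rfl hx.symm
  | @cons _ b _ h q =>
    rw [cons_isPath_iff] at hpp
    have hbu : b = u := hv b h
    have hreach : (gdelete H {v}).Reachable b x :=
      transfer_reachable_of_not_mem_support q hpp.2
    rw [hbu] at hreach h
    exact ⟨h, hreach⟩

lemma reachable_gdelete_iff {H : SimpleGraph V} {v u : V} (hv : ∀ z, H.Adj v z → z = u)
    {r x : V} (hr : r ≠ v) (hx : x ≠ v) :
    H.Reachable r x ↔ (gdelete H {v}).Reachable r x := by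
  haveI := Classical.decEq V
  constructor
  · intro h
    obtain ⟨w⟩ := h
    have hvp : v ∉ (w.toPath.1).support :=
      pendant_not_mem_path_support hv w.toPath.2 hr hx
    exact transfer_reachable_of_not_mem_support _ hvp
  · exact fun h => h.mono (gdelete_le H {v})

lemma reachable_pendant_iff {H : SimpleGraph V} {v u : V} (hv : ∀ z, H.Adj v z → z = u)
    {r : V} (hr : r ≠ v) :
    H.Reachable r v ↔ (H.Adj v u ∧ (gdelete H {v}).Reachable r u) := by
  constructor
  · intro h
    obtain ⟨hadj, hreach⟩ := reach_avoid hv hr h.symm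
    exact ⟨hadj, hreach.symm⟩
  · rintro ⟨hadj, h⟩
    exact (h.mono (gdelete_le H {v})).trans hadj.symm.reachable

variable {G : SimpleGraph V}

lemma gdelete_comm (G : SimpleGraph V) (A B : Set V) :
    gdelete (gdelete G A) B = gdelete (gdelete G B) A := by
  rw [gdelete_gdelete, gdelete_gdelete, Set.union_comm]

lemma mem_component {S : Set V} {r x : V} :
    x ∈ component G S r ↔ (gdelete G S).Reachable r x := Iff.rfl

lemma not_mem_component_of_mem {S : Set V} {r x : V} (hx : x ∈ S) (hr : r ∉ S) :
    x ∉ component G S r := by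
  refine not_reachable_no_edge (fun z hz => hz.2.2 hx) (fun hh => hr (hh ▸ hx))

lemma not_mem_component_self_deleted {S : Set V} {v r : V} (hv : v ∈ S) (hr : r ≠ v) :
    v ∉ component G S r :=
  not_reachable_no_edge (fun z hz => hz.2.2 hv) hr

/-- The key component dichotomy. -/
lemma component_pendant {v u : V} {S : Set V} (hv : ∀ z, G.Adj v z → z = u)
    (hadj : G.Adj v u) {r : V} (hr : r ≠ v) (hrS : r ∉ S) (hvS : v ∉ S) :
    (u ∈ component (gdelete G {v}) S r ∧
       component G S r = insert v (component (gdelete G {v}) S r)) ∨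
    (u ∉ component (gdelete G {v}) S r ∧
       component G S r = component (gdelete G {v}) S r) := by
  have hv' : ∀ z, (gdelete G S).Adj v z → z = u := fun z hz => hv z hz.1
  have hcomm : gdelete (gdelete G {v}) S = gdelete (gdelete G S) {v} := gdelete_comm G _ _
  have hiff : ∀ x, x ≠ v →
      (x ∈ component G S r ↔ x ∈ component (gdelete G {v}) S r) := by
    intro x hx
    rw [mem_component, mem_component, hcomm]
    exact reachable_gdelete_iff hv' hr hx
  have hviff : v ∈ component G S r ↔
      ((gdelete G S).Adj v u ∧ u ∈ component (gdelete G {v}) S r) := by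
    rw [mem_component, mem_component, hcomm]
    exact reachable_pendant_iff hv' hr
  by_cases hu : u ∈ component (gdelete G {v}) S r
  · left
    have huS : u ∉ S := by
      intro huS'
      exact not_mem_component_of_mem (G := gdelete G {v}) huS' hrS hu
    refine ⟨hu, ?_⟩
    ext x
    by_cases hx : x = v
    · subst hx
      simp only [Set.mem_insert_iff, true_or, iff_true]
      exact hviff.mpr ⟨⟨hadj, hvS, huS⟩, hu⟩
    · rw [hiff x hx]
      simp [Set.mem_insert_iff, hx]
  · right
    refine ⟨hu, ?_⟩
    ext x
    by_cases hx : x = v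
    · subst hx
      constructor
      · intro hh; exact absurd (hviff.mp hh).2 hu
      · intro hh
        exact absurd (mem_component.mp hh) (by
          rw [hcomm]
          exact not_reachable_no_edge (fun z hz => hz.2.2 rfl) hr)
    · exact hiff x hx

/-! ### Weights -/

lemma weight_congr {w₁ w₂ : V → ℕ} {S : Set V} (h : ∀ x ∈ S, w₁ x = w₂ x) :
    weight w₁ S = weight w₂ S :=
  finsum_mem_congr rfl h

lemma weight_insert [Fintype V] (w : V → ℕ) {v : V} {S : Set V} (hvS : v ∉ S) :
    weight w (insert v S) = w v + weight w S :=
  finsum_mem_insert w hvS (Set.toFinite S)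

lemma weight_diff_singleton [Fintype V] (w : V → ℕ) {v : V} {S : Set V} (hvS : v ∈ S) :
    weight w S = w v + weight w (S \ {v}) := by
  conv_lhs => rw [show S = insert v (S \ {v}) by
    rw [Set.insert_diff_singleton, Set.insert_eq_self.mpr hvS]]
  exact weight_insert w (by simp)

/-! ### Weight transfer for the modified weight function -/

section WeightTransfer
variable [Fintype V] {w w' : V → ℕ} {v u : V}

lemma weight_w'_of_mem (hw'u : w' u = w u + w v) (hw'x : ∀ x : V, x ≠ u → w' x = w x)
    {T : Set V} (hu : u ∈ T) : weight w' T = weight w T + w v := by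
  rw [weight_diff_singleton w' hu, weight_diff_singleton w hu, hw'u,
    weight_congr (fun x hx => hw'x x (by simpa using hx.2))]
  omega

lemma weight_w'_of_not_mem (hw'x : ∀ x : V, x ≠ u → w' x = w x)
    {T : Set V} (hu : u ∉ T) : weight w' T = weight w T :=
  weight_congr (fun x hx => hw'x x (fun hh => hu (hh ▸ hx)))

end WeightTransfer

/-! ### The tree correspondence -/

section Correspondence

variable [Fintype V] {G : SimpleGraph V} {v u : V}

lemma not_mem_component_gdelete_v {S : Set V} {r : V} (hr : r ≠ v) :
    v ∉ component (gdelete G {v}) S r :=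
  not_reachable_no_edge (fun _ hz => hz.1.2.2 rfl) hr

/-- Map a described tree of `G` down to a described tree of `G - v`. -/
lemma tree_down (hv : ∀ z, G.Adj v z → z = u) (hvadj : G.Adj v u)
    {C : Set V} (hC : IsInducedTree G C) (hrC : ∃ r ∈ C, r ≠ v)
    (hvnb : v ∉ openNbhd G C) :
    ∃ C', v ∉ C' ∧ IsInducedTree (gdelete G {v}) C' ∧
      openNbhd G C = openNbhd (gdelete G {v}) C' ∧ C' ⊆ C ∧
      ((v ∈ C ∧ C = insert v C' ∧ u ∈ C') ∨ (v ∉ C ∧ u ∉ C ∧ C' = C)) := by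
  by_cases hvC : v ∈ C
  · obtain ⟨r, hrmem, hrne⟩ := hrC
    have huC : u ∈ C := mem_of_inducedTree_pendant hv hC hvC hrmem hrne
    have hvC' : v ∉ C \ {v} := by simp
    have huC' : u ∈ C \ {v} := ⟨huC, by simpa using hvadj.ne'⟩
    have hins : C = insert v (C \ {v}) := by
      rw [Set.insert_diff_singleton, Set.insert_eq_self.mpr hvC]
    refine ⟨C \ {v}, hvC', ?_, ?_, Set.diff_subset, Or.inl ⟨hvC, hins, huC'⟩⟩
    · rw [isInducedTree_gdelete hvC']
      rw [← isInducedTree_insert_pendant hv hvadj hvC' huC', ← hins]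
      exact hC
    · exact openNbhd_pendant_mem hv hvC huC hvadj.ne
  · have huC : u ∉ C := by
      intro huC
      exact hvnb (mem_openNbhd_pendant hvadj hvC huC)
    refine ⟨C, hvC, (isInducedTree_gdelete hvC).mpr hC,
      (openNbhd_eq_gdelete_of_not_mem hv hvC huC).symm, subset_rfl,
      Or.inr ⟨hvC, huC, rfl⟩⟩

/-- Map a tree of `G - v` (avoiding `v`) up to a tree of `G`. -/
lemma tree_up (hv : ∀ z, G.Adj v z → z = u) (hvadj : G.Adj v u)
    {T : Set V} (hvT : v ∉ T) (hT : IsInducedTree (gdelete G {v}) T) :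
    ∃ T₂, IsInducedTree G T₂ ∧ openNbhd G T₂ = openNbhd (gdelete G {v}) T ∧
      T ⊆ T₂ ∧ ((u ∈ T ∧ T₂ = insert v T) ∨ (u ∉ T ∧ T₂ = T)) := by
  have hTG : IsInducedTree G T := (isInducedTree_gdelete hvT).mp hT
  by_cases huT : u ∈ T
  · refine ⟨insert v T, ?_, ?_, Set.subset_insert _ _, Or.inl ⟨huT, rfl⟩⟩
    · exact (isInducedTree_insert_pendant hv hvadj hvT huT).mpr hTG
    · rw [openNbhd_insert_pendant hv huT hvT, openNbhd_gdelete_single hvT]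
  · exact ⟨T, hTG, (openNbhd_eq_gdelete_of_not_mem hv hvT huT).symm, subset_rfl,
      Or.inr ⟨huT, rfl⟩⟩

end Correspondence

end Helpers

/-- safeness of contracting a degree-1 vertex: if `𝔛` is a non-redundant
set of descriptions for `G − v` describing exactly the maximum `w'`-weight `k`-secluded
supertrees of `F'` in `G − v`, then `𝔛` is a non-redundant set of descriptions for `G`
describing exactly the maximum `w`-weight `k`-secluded supertrees of `F` in `G`. -/
theorem contract_degree_one_safe [Fintype V] (G : SimpleGraph V) (w : V → ℕ)
    (hw : ∀ x : V, 0 < w x) (k : ℕ) (F : Set V) (hF : F.Nonempty)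
    (v u : V) (hvu : G.neighborSet v = {u}) (hFv : F ≠ {v})
    (w' : V → ℕ) (hw'u : w' u = w u + w v) (hw'x : ∀ x : V, x ≠ u → w' x = w x)
    (F' : Set V) (hF'mem : v ∈ F → F' = (F \ {v}) ∪ {u}) (hF'nmem : v ∉ F → F' = F)
    (𝔛 : Set (V × Set (Set V)))
    (hdesc : ∀ D ∈ 𝔛, IsDescription (gdelete G {v}) D.1 D.2)
    (havoid : ∀ D ∈ 𝔛, D.1 ≠ v ∧ ∀ X ∈ D.2, v ∉ X)
    (hnr : NonRedundant (gdelete G {v}) 𝔛)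
    (hT : treesOf (gdelete G {v}) 𝔛 =
      maxset w' {S ∈ secl (gdelete G {v}) k F' | v ∉ S}) :
    (∀ D ∈ 𝔛, IsDescription G D.1 D.2) ∧ NonRedundant G 𝔛 ∧
      treesOf G 𝔛 = maxset w (secl G k F) := by
  classical
  have hv : ∀ z, G.Adj v z → z = u := by
    intro z hz
    have hh : z ∈ G.neighborSet v := hz
    rwa [hvu, Set.mem_singleton_iff] at hh
  have hvadj : G.Adj v u := by
    have hh : u ∈ G.neighborSet v := by rw [hvu]; rfl
    exact hh
  have hvne : v ≠ u := hvadj.ne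
  have hF'mem' : ∀ x ∈ F, x ≠ v → x ∈ F' := by
    intro x hx hxv
    by_cases hvF : v ∈ F
    · rw [hF'mem hvF]; exact Or.inl ⟨hx, hxv⟩
    · rw [hF'nmem hvF]; exact hx
  have hSne : ∀ {S : Set V}, F ⊆ S → v ∈ S → ∃ x ∈ S, x ≠ v := by
    intro S hFS hvS
    by_contra hcon
    push_neg at hcon
    have hSv : S = {v} := Set.eq_singleton_iff_unique_mem.mpr ⟨hvS, fun x hx => hcon x hx⟩
    exact hFv ((Set.Nonempty.subset_singleton_iff hF).mp (hSv ▸ hFS))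
  have hWin : ∀ {T : Set V}, u ∈ T → weight w' T = weight w T + w v :=
    fun hu => weight_w'_of_mem hw'u hw'x hu
  have hWout : ∀ {T : Set V}, u ∉ T → weight w' T = weight w T :=
    fun hu => weight_w'_of_not_mem hw'x hu
  -- mapping arbitrary secluded supertrees of `F` in `G` down to `G - v`
  have mapdown : ∀ S ∈ secl G k F, ∃ S₂, (S₂ ∈ secl (gdelete G {v}) k F' ∧ v ∉ S₂) ∧
      weight w S ≤ weight w' S₂ := by
    rintro S ⟨⟨hStree, hSn⟩, hFS⟩
    by_cases hvS : v ∈ S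
    · obtain ⟨x, hxS, hxv⟩ := hSne hFS hvS
      have huS : u ∈ S := mem_of_inducedTree_pendant hv hStree hvS hxS hxv
      have hvS' : v ∉ S \ {v} := by simp
      have huS' : u ∈ S \ {v} := ⟨huS, by simpa using hvne.symm⟩
      have hins : S = insert v (S \ {v}) := by
        rw [Set.insert_diff_singleton, Set.insert_eq_self.mpr hvS]
      refine ⟨S \ {v}, ⟨⟨⟨?_, ?_⟩, ?_⟩, hvS'⟩, ?_⟩
      · rw [isInducedTree_gdelete hvS', ← isInducedTree_insert_pendant hv hvadj hvS' huS',
          ← hins]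
        exact hStree
      · rw [← openNbhd_pendant_mem hv hvS huS hvne]
        exact hSn
      · intro y hy
        by_cases hvF : v ∈ F
        · rw [hF'mem hvF] at hy
          rcases hy with ⟨hyF, hyv⟩ | hyu
          · exact ⟨hFS hyF, hyv⟩
          · rw [Set.mem_singleton_iff] at hyu; subst hyu; exact huS'
        · rw [hF'nmem hvF] at hy
          refine ⟨hFS hy, ?_⟩
          simp only [Set.mem_singleton_iff]
          rintro rfl
          exact hvF hy
      · rw [hWin huS', weight_diff_singleton w hvS]
        omega
    · have hSGv : IsInducedTree (gdelete G {v}) S := (isInducedTree_gdelete hvS).mpr hStree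
      have hFv' : v ∉ F := fun hh => hvS (hFS hh)
      have hF'S : F' ⊆ S := by rw [hF'nmem hFv']; exact hFS
      by_cases huS : u ∈ S
      · refine ⟨S, ⟨⟨⟨hSGv, ?_⟩, hF'S⟩, hvS⟩, ?_⟩
        · rw [openNbhd_gdelete_single hvS]
          exact le_trans (Set.ncard_le_ncard Set.diff_subset (Set.toFinite _)) hSn
        · rw [hWin huS]; omega
      · refine ⟨S, ⟨⟨⟨hSGv, ?_⟩, hF'S⟩, hvS⟩, ?_⟩
        · rw [openNbhd_eq_gdelete_of_not_mem hv hvS huS]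
          exact hSn
        · rw [hWout huS]
  -- mapping secluded supertrees of `F'` in `G - v` up to `G`
  have mapup : ∀ T, T ∈ secl (gdelete G {v}) k F' → v ∉ T →
      ∃ T₂ ∈ secl G k F, weight w T₂ = weight w' T := by
    rintro T ⟨⟨hTtree, hTn⟩, hF'T⟩ hvT
    obtain ⟨T₂, hT₂tree, hT₂nb, hTT₂, hcase⟩ := tree_up hv hvadj hvT hTtree
    refine ⟨T₂, ⟨⟨hT₂tree, by rw [hT₂nb]; exact hTn⟩, ?_⟩, ?_⟩
    · intro x hx
      by_cases hxv : x = v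
      · subst hxv
        have huT : u ∈ T := hF'T (by rw [hF'mem hx]; exact Or.inr rfl)
        rcases hcase with ⟨-, rfl⟩ | ⟨hu, -⟩
        · exact Set.mem_insert _ _
        · exact absurd huT hu
      · exact hTT₂ (hF'T (hF'mem' x hx hxv))
    · rcases hcase with ⟨huT, rfl⟩ | ⟨huT, rfl⟩
      · rw [weight_insert w hvT, hWin huT]; omega
      · rw [hWout huT]
  -- mapping described trees of `G` down to described trees of `G - v`
  have main1 : ∀ C, IsInducedTree G C → ∀ D ∈ 𝔛, Describes G D C →
      ∃ C', v ∉ C' ∧ IsInducedTree (gdelete G {v}) C' ∧ Describes (gdelete G {v}) D C' ∧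
        openNbhd G C = openNbhd (gdelete G {v}) C' ∧ weight w' C' = weight w C ∧ C' ⊆ C ∧
        ((v ∈ C ∧ C = insert v C' ∧ u ∈ C') ∨ (v ∉ C ∧ u ∉ C ∧ C' = C)) := by
    intro C hC D hD hdc
    have hvnb : v ∉ openNbhd G C := by
      intro hmem
      obtain ⟨X, hX, hvX⟩ := hdc.2.1 hmem
      exact (havoid D hD).2 X hX hvX
    have hrC : ∃ r ∈ C, r ≠ v := ⟨D.1, hdc.1, (havoid D hD).1⟩
    obtain ⟨C', hvC', htree', hnb', hsub', hcase'⟩ := tree_down hv hvadj hC hrC hvnb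
    refine ⟨C', hvC', htree', ⟨?_, by rw [← hnb']; exact hdc.2⟩, hnb', ?_, hsub', hcase'⟩
    · rcases hcase' with ⟨hvC, hCeq, -⟩ | ⟨-, -, heq⟩
      · have hh : D.1 ∈ insert v C' := hCeq ▸ hdc.1
        rcases hh with h | h
        · exact absurd h (havoid D hD).1
        · exact h
      · rw [heq]; exact hdc.1
    · rcases hcase' with ⟨hvC, hCeq, huC'⟩ | ⟨-, huC, heq⟩
      · rw [hWin huC', hCeq, weight_insert w hvC']
        omega
      · rw [heq]
        exact hWout huC
  -- Part 1: descriptions for G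
  have hdescG : ∀ D ∈ 𝔛, IsDescription G D.1 D.2 := by
    intro D hD
    obtain ⟨h1, h2, h3⟩ := hdesc D hD
    refine ⟨h1, h2, ?_⟩
    intro S hS
    have hvS : v ∉ S := by
      intro hmem
      obtain ⟨X, hX, hvX⟩ := hS.1 hmem
      exact (havoid D hD).2 X hX hvX
    have hrS : D.1 ∉ S := by
      intro hmem
      obtain ⟨X, hX, hrX⟩ := hS.1 hmem
      exact h1 X hX hrX
    have hrv : D.1 ≠ v := (havoid D hD).1
    obtain ⟨hacyc, hopen⟩ := h3 S hS
    have hvcomp : v ∉ component (gdelete G {v}) S D.1 := not_mem_component_gdelete_v hrv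
    have hindeq : (gdelete G {v}).induce (component (gdelete G {v}) S D.1) =
        G.induce (component (gdelete G {v}) S D.1) :=
      induce_gdelete G (fun x hx hxv => by
        rw [Set.mem_singleton_iff] at hxv
        exact hvcomp (hxv ▸ hx))
    rcases component_pendant hv hvadj hrv hrS hvS with ⟨hu, hcomp⟩ | ⟨hu, hcomp⟩
    · rw [hcomp]
      constructor
      · rw [master_acyclic hv hvcomp, ← hindeq]
        exact hacyc
      · rw [openNbhd_insert_pendant hv hu hvcomp, ← openNbhd_gdelete_single hvcomp]
        exact hopen
    · rw [hcomp]
      exact ⟨by rw [← hindeq]; exact hacyc,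
        by rw [← openNbhd_eq_gdelete_of_not_mem hv hvcomp hu]; exact hopen⟩
  -- Part 2: non-redundancy for G
  have hnrG : NonRedundant G 𝔛 := by
    intro C hC D₁ hD₁ D₂ hD₂ hdc₁ hdc₂
    obtain ⟨C₁, hv₁, ht₁, hd₁, -, -, -, hcase₁⟩ := main1 C hC D₁ hD₁ hdc₁
    obtain ⟨C₂, hv₂, ht₂, hd₂, -, -, -, hcase₂⟩ := main1 C hC D₂ hD₂ hdc₂
    have hCC : C₁ = C₂ := by
      rcases hcase₁ with ⟨hvC1, he₁, -⟩ | ⟨hvC1, -, he₁⟩ <;>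
        rcases hcase₂ with ⟨hvC2, he₂, -⟩ | ⟨hvC2, -, he₂⟩
      · have e1 : C \ {v} = C₁ := by rw [he₁, Set.insert_diff_self_of_notMem hv₁]
        have e2 : C \ {v} = C₂ := by rw [he₂, Set.insert_diff_self_of_notMem hv₂]
        rw [← e1, e2]
      · exact absurd hvC1 hvC2
      · exact absurd hvC2 hvC1
      · rw [he₁, he₂]
    subst hCC
    exact hnr C₁ ht₁ D₁ hD₁ D₂ hD₂ hd₁ hd₂
  refine ⟨hdescG, hnrG, ?_⟩
  -- Part 3
  ext C
  constructor
  · rintro ⟨hC, D, hD, hdc⟩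
    obtain ⟨C', hvC', htC', hdC', hnbC', hwC', hsubC', hcaseC'⟩ := main1 C hC D hD hdc
    have hmemT : C' ∈ treesOf (gdelete G {v}) 𝔛 := ⟨htC', D, hD, hdC'⟩
    rw [hT] at hmemT
    obtain ⟨⟨⟨⟨htree', hn'⟩, hF''⟩, -⟩, hmax'⟩ := hmemT
    refine ⟨⟨⟨hC, by rw [hnbC']; exact hn'⟩, ?_⟩, ?_⟩
    · intro x hx
      by_cases hxv : x = v
      · subst hxv
        have huC' : u ∈ C' := hF'' (by rw [hF'mem hx]; exact Or.inr rfl)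
        rcases hcaseC' with ⟨hvC, -, -⟩ | ⟨-, huC, he⟩
        · exact hvC
        · exact absurd (he ▸ huC' : u ∈ C) huC
      · exact hsubC' (hF'' (hF'mem' x hx hxv))
    · intro S hS
      obtain ⟨S₂, hS₂, hwS₂⟩ := mapdown S hS
      calc weight w S ≤ weight w' S₂ := hwS₂
        _ ≤ weight w' C' := hmax' S₂ hS₂
        _ = weight w C := hwC'
  · rintro ⟨⟨⟨hC, hn⟩, hFC⟩, hmax⟩
    have hstep : ∃ C', v ∉ C' ∧ IsInducedTree (gdelete G {v}) C' ∧
        openNbhd G C = openNbhd (gdelete G {v}) C' ∧ F' ⊆ C' ∧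
        weight w' C' = weight w C ∧ C' ⊆ C := by
      by_cases hvC : v ∈ C
      · obtain ⟨x, hxC, hxv⟩ := hSne hFC hvC
        have huC : u ∈ C := mem_of_inducedTree_pendant hv hC hvC hxC hxv
        have hvC' : v ∉ C \ {v} := by simp
        have huC' : u ∈ C \ {v} := ⟨huC, by simpa using hvne.symm⟩
        have hins : C = insert v (C \ {v}) := by
          rw [Set.insert_diff_singleton, Set.insert_eq_self.mpr hvC]
        refine ⟨C \ {v}, hvC', ?_, ?_, ?_, ?_, Set.diff_subset⟩
        · rw [isInducedTree_gdelete hvC', ← isInducedTree_insert_pendant hv hvadj hvC' huC',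
            ← hins]
          exact hC
        · exact openNbhd_pendant_mem hv hvC huC hvne
        · intro y hy
          by_cases hvF : v ∈ F
          · rw [hF'mem hvF] at hy
            rcases hy with ⟨hyF, hyv⟩ | hyu
            · exact ⟨hFC hyF, hyv⟩
            · rw [Set.mem_singleton_iff] at hyu; subst hyu; exact huC'
          · rw [hF'nmem hvF] at hy
            refine ⟨hFC hy, ?_⟩
            simp only [Set.mem_singleton_iff]
            rintro rfl
            exact hvF hy
        · rw [hWin huC', weight_diff_singleton w hvC]
          omega
      · by_cases huC : u ∈ C
        · exfalso
          have hins : insert v C ∈ secl G k F := by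
            refine ⟨⟨(isInducedTree_insert_pendant hv hvadj hvC huC).mpr hC, ?_⟩,
              fun x hx => Set.mem_insert_of_mem _ (hFC hx)⟩
            rw [openNbhd_insert_pendant hv huC hvC]
            exact le_trans (Set.ncard_le_ncard Set.diff_subset (Set.toFinite _)) hn
          have hle := hmax _ hins
          rw [weight_insert w hvC] at hle
          have := hw v
          omega
        · have hFv' : v ∉ F := fun hh => hvC (hFC hh)
          exact ⟨C, hvC, (isInducedTree_gdelete hvC).mpr hC,
            (openNbhd_eq_gdelete_of_not_mem hv hvC huC).symm,
            by rw [hF'nmem hFv']; exact hFC, hWout huC, subset_rfl⟩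
    obtain ⟨C', hvC', htC', hnbC', hF'C', hwC', hsubC'⟩ := hstep
    have hmemmax : C' ∈ maxset w' {S ∈ secl (gdelete G {v}) k F' | v ∉ S} := by
      refine ⟨⟨⟨⟨htC', by rw [← hnbC']; exact hn⟩, hF'C'⟩, hvC'⟩, ?_⟩
      rintro T ⟨hTsecl, hvT⟩
      obtain ⟨T₂, hT₂, hwT₂⟩ := mapup T hTsecl hvT
      calc weight w' T = weight w T₂ := hwT₂.symm
        _ ≤ weight w C := hmax T₂ hT₂
        _ = weight w' C' := hwC'.symm
    rw [← hT] at hmemmax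
    obtain ⟨-, D, hD, hdC'⟩ := hmemmax
    refine ⟨hC, D, hD, hsubC' hdC'.1, ?_⟩
    rw [hnbC']
    exact hdC'.2


end Secluded
end

section
/- Let G be a finite simple graph, let k ≥ 0 be an integer, and let T ⊆ F ⊆ V(G) with T nonempty and G[T] connected. Suppose that every degree-1 vertex u of G satisfies F = {u} (the instance is almost leafless) and that |N_G(T)| > k(k+1). If H is a k-secluded supertree of F in G, then there exists a vertex v ∈ N_G(H) (hence v ∉ F) together with k+2 paths in G, each starting at a vertex of N_G(T), ending at v, containing no vertex of T, and pairwise intersecting only in v. -/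
namespace Secluded

open SimpleGraph

variable {V : Type*}

section Helpers

variable {G : SimpleGraph V}



/-- Lift a walk with support in `H` to the induced subgraph. -/
lemma lift_walk {H : Set V} {a b : V} (ha : a ∈ H) (hb : b ∈ H) (p : G.Walk a b)
    (hp : ∀ x ∈ p.support, x ∈ H) :
    ∃ q : (G.induce H).Walk ⟨a, ha⟩ ⟨b, hb⟩, q.support.map Subtype.val = p.support := by
  induction p with
  | nil => exact ⟨Walk.nil, rfl⟩
  | @cons u c w h p ih =>
    have hc : c ∈ H := hp c (by simp)
    obtain ⟨q, hq⟩ := ih hc hb (fun x hx => hp x (by simp [hx]))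
    exact ⟨Walk.cons (by simpa using h : (G.induce H).Adj ⟨u, ha⟩ ⟨c, hc⟩) q, by simp [hq]⟩

/-- Project a walk in an induced subgraph down to `G`. -/
lemma lower_walk {H : Set V} {a b : H} (q : (G.induce H).Walk a b) :
    ∃ p : G.Walk a b, p.support = q.support.map Subtype.val := by
  induction q with
  | nil => exact ⟨Walk.nil, rfl⟩
  | @cons u c w h q ih =>
    obtain ⟨p, hp⟩ := ih
    exact ⟨Walk.cons (by simpa using h) p, by simp [hp]⟩

/-- In a graph whose induced subgraph on `H` is acyclic, two paths between the same
endpoints with support in `H` have the same support. -/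
lemma support_eq_of_acyclic {H : Set V} (hac : (G.induce H).IsAcyclic)
    {a b : V} (p q : G.Walk a b) (hp : p.IsPath) (hq : q.IsPath)
    (hpH : ∀ x ∈ p.support, x ∈ H) (hqH : ∀ x ∈ q.support, x ∈ H) :
    p.support = q.support := by
  have ha : a ∈ H := hpH a p.start_mem_support
  have hb : b ∈ H := hpH b p.end_mem_support
  obtain ⟨p', hp'⟩ := lift_walk ha hb p hpH
  obtain ⟨q', hq'⟩ := lift_walk ha hb q hqH
  have hpp : p'.IsPath := by
    rw [Walk.isPath_def]
    have := (Walk.isPath_def _).mp hp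
    rw [← hp'] at this
    exact (List.nodup_map_iff Subtype.val_injective).mp this
  have hqp : q'.IsPath := by
    rw [Walk.isPath_def]
    have := (Walk.isPath_def _).mp hq
    rw [← hq'] at this
    exact (List.nodup_map_iff Subtype.val_injective).mp this
  have : (⟨p', hpp⟩ : (G.induce H).Path _ _) = ⟨q', hqp⟩ := hac.path_unique _ _
  have : p' = q' := congrArg Subtype.val this
  rw [← hp', ← hq', this]

lemma isPath_concat {a b c : V} {p : G.Walk a b} (hp : p.IsPath) (h : G.Adj b c)
    (hc : c ∉ p.support) : (p.concat h).IsPath := by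
  rw [Walk.isPath_def, Walk.support_concat]
  simpa [List.nodup_append] using ⟨hp.support_nodup, fun x hx hxc => hc (hxc ▸ hx)⟩

/-- A path between two vertices of `T` staying in `T`. -/
lemma exists_T_path {T : Set V} (hTconn : (G.induce T).Connected) {t t' : V}
    (ht : t ∈ T) (ht' : t' ∈ T) :
    ∃ p : G.Walk t t', p.IsPath ∧ ∀ x ∈ p.support, x ∈ T := by
  classical
  obtain ⟨q⟩ := hTconn.preconnected ⟨t, ht⟩ ⟨t', ht'⟩
  obtain ⟨p, hp⟩ := lower_walk q
  refine ⟨p.toPath, (p.toPath).2, fun x hx => ?_⟩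
  have hx' : x ∈ p.support := Walk.support_toPath_subset p hx
  rw [hp] at hx'
  obtain ⟨a, -, rfl⟩ := List.mem_map.mp hx'
  exact a.2

/-- A path from `s` to `s'` through `T`. -/
lemma through_T {T : Set V} (hTconn : (G.induce T).Connected) {s s' t t' : V}
    (hs : s ∉ T) (hs' : s' ∉ T) (hss' : s ≠ s') (ht : t ∈ T) (ht' : t' ∈ T)
    (hst : G.Adj s t) (ht's' : G.Adj t' s') :
    ∃ w : G.Walk s s', w.IsPath ∧ (∀ x ∈ w.support, x ∈ T ∨ x = s ∨ x = s') ∧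
      t ∈ w.support := by
  obtain ⟨R, hR, hRT⟩ := exists_T_path hTconn ht ht'
  have h1 : s' ∉ R.support := fun h => hs' (hRT _ h)
  have hinner : (R.concat ht's').IsPath := isPath_concat hR ht's' h1
  have h2 : s ∉ (R.concat ht's').support := by
    rw [Walk.support_concat]
    simp only [List.mem_append, List.mem_singleton]
    rintro (h | rfl)
    · exact hs (hRT _ h)
    · exact hss' rfl
  refine ⟨Walk.cons hst (R.concat ht's'), hinner.cons h2, ?_, ?_⟩
  · intro x hx
    rw [Walk.support_cons] at hx
    rcases List.mem_cons.mp hx with rfl | hx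
    · exact Or.inr (Or.inl rfl)
    · rw [Walk.support_concat] at hx
      rcases List.mem_append.mp hx with h | h
      · exact Or.inl (hRT _ h)
      · simp at h; exact Or.inr (Or.inr h)
  · rw [Walk.support_cons, Walk.support_concat]
    simp [R.start_mem_support]

section
variable {T H : Set V}





lemma exists_escape [Fintype V] (hac : (G.induce H).IsAcyclic)
    (hTconn : (G.induce T).Connected) (hTH : T ⊆ H)
    (hdeg : ∀ x, x ∉ T → degOf G x ≠ 1)
    {s : V} (hsH : s ∈ H) (hsT : s ∉ T) (t₀ : V) (ht₀ : t₀ ∈ T) (hadj : G.Adj s t₀) :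
    ∃ (ℓ v : V) (p : G.Walk s ℓ), p.IsPath ∧ (∀ x ∈ p.support, x ∈ H ∧ x ∉ T) ∧
      G.Adj ℓ v ∧ v ∉ H := by
  classical
  set Pred : ℕ → Prop := fun n => ∃ (x : V) (p : G.Walk s x), p.IsPath ∧
    (∀ y ∈ p.support, y ∈ H ∧ y ∉ T) ∧ p.length = n with hPred
  have h0 : Pred 0 := ⟨s, Walk.nil, Walk.IsPath.nil, by simp [hsH, hsT], rfl⟩
  have hbd : ∀ m, Pred m → m ≤ Fintype.card V := by
    rintro m ⟨x, p, hp, -, rfl⟩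
    exact hp.length_lt.le
  set n := Nat.findGreatest Pred (Fintype.card V) with hn
  have hPn : Pred n := Nat.findGreatest_spec (hbd 0 h0) h0
  have hmax : ∀ m, Pred m → m ≤ n := fun m hm => Nat.le_findGreatest (hbd m hm) hm
  obtain ⟨ℓ, p, hp, hpHT, hplen⟩ := hPn
  have hpH : ∀ y ∈ p.support, y ∈ H := fun y hy => (hpHT y hy).1
  have hℓH : ℓ ∈ H := (hpHT ℓ p.end_mem_support).1
  have hℓT : ℓ ∉ T := (hpHT ℓ p.end_mem_support).2
  by_contra hcon
  push_neg at hcon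
  have hnbH : ∀ v, G.Adj ℓ v → v ∈ H := fun v hv => hcon ℓ v p hp hpHT hv
  -- no neighbor of ℓ lies in T unless ℓ = s
  have key : ∀ y z, G.Adj ℓ y → G.Adj ℓ z → y = z := by
    rcases Nat.eq_zero_or_pos n with hn0 | hn0
    · -- ℓ = s : all neighbors lie in T, and there can be at most one
      have hls : s = ℓ := Walk.eq_of_length_eq_zero (hplen.trans hn0)
      subst hls
      have hTmem : ∀ y, G.Adj s y → y ∈ T := by
        intro y hy
        by_contra hyT
        have hys : y ≠ s := fun h => G.irrefl (h ▸ hy)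
        have h1 : Pred 1 := by
          refine ⟨y, Walk.cons hy Walk.nil, by simp [hys.symm], ?_, by simp⟩
          intro z hz
          simp only [Walk.support_cons, Walk.support_nil, List.mem_cons,
            List.not_mem_nil, or_false] at hz
          rcases hz with rfl | rfl
          · exact ⟨hℓH, hℓT⟩
          · exact ⟨hnbH _ hy, hyT⟩
        have := hmax 1 h1
        omega
      intro y z hy hz
      by_contra hyz
      have hyT := hTmem y hy
      have hzT := hTmem z hz
      obtain ⟨R, hR, hRT⟩ := exists_T_path hTconn hyT hzT
      have hsR : s ∉ R.support := fun h => hsT (hRT _ h)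
      have hP2 : (Walk.cons hy R).IsPath := hR.cons hsR
      have hzs : s ≠ z := fun h => G.irrefl (h ▸ hz)
      have hP1 : (Walk.cons hz Walk.nil).IsPath := by simp [hzs]
      have hsupp := support_eq_of_acyclic hac (Walk.cons hy R) (Walk.cons hz Walk.nil)
        hP2 hP1 (by
          intro x hx
          rcases List.mem_cons.mp hx with rfl | hx
          · exact hℓH
          · exact hTH (hRT _ hx))
        (by
          intro x hx
          simp only [Walk.support_cons, Walk.support_nil, List.mem_cons,
            List.not_mem_nil, or_false] at hx
          rcases hx with rfl | rfl
          · exact hℓH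
          · exact hTH hzT)
      have hyin : y ∈ (Walk.cons hy R).support := by simp [R.start_mem_support]
      rw [hsupp] at hyin
      simp only [Walk.support_cons, Walk.support_nil, List.mem_cons,
        List.not_mem_nil, or_false] at hyin
      rcases hyin with rfl | rfl
      · exact G.irrefl hy
      · exact hyz rfl
    · -- n > 0 : every neighbor equals p.getVert (n-1)
      have hsl : s ≠ ℓ := by
        rintro rfl
        rw [Walk.isPath_iff_eq_nil] at hp
        rw [hp] at hplen
        simp at hplen
        omega
      have hcanon : ∀ y, G.Adj ℓ y → y = p.getVert (n - 1) := by
        intro y hy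
        -- y ∉ T
        have hyT : y ∉ T := by
          intro hyT
          obtain ⟨R, hR, hRT⟩ := exists_T_path hTconn ht₀ hyT
          have hℓR : ℓ ∉ R.support := fun h => hℓT (hRT _ h)
          have hinner : (R.concat hy.symm).IsPath := isPath_concat hR hy.symm hℓR
          have hsi : s ∉ (R.concat hy.symm).support := by
            rw [Walk.support_concat]
            simp only [List.mem_append, List.mem_singleton]
            rintro (h | rfl)
            · exact hsT (hRT _ h)
            · exact hsl rfl
          have hw : (Walk.cons hadj (R.concat hy.symm)).IsPath := hinner.cons hsi
          have hsupp := support_eq_of_acyclic hac p (Walk.cons hadj (R.concat hy.symm))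
            hp hw hpH (by
              intro x hx
              rcases List.mem_cons.mp hx with rfl | hx
              · exact hsH
              · rw [Walk.support_concat] at hx
                rcases List.mem_append.mp hx with h | h
                · exact hTH (hRT _ h)
                · simp at h; exact h ▸ hℓH)
          have ht₀in : t₀ ∈ (Walk.cons hadj (R.concat hy.symm)).support := by
            rw [Walk.support_cons, Walk.support_concat]
            simp [R.start_mem_support]
          rw [← hsupp] at ht₀in
          exact (hpHT t₀ ht₀in).2 ht₀
        -- y ∈ p.support
        have hyp : y ∈ p.support := by
          by_contra hyp
          have hPs : Pred (n + 1) := by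
            refine ⟨y, p.concat hy, isPath_concat hp hy hyp, ?_, by
              rw [Walk.concat_eq_append, Walk.length_append]; simp [hplen]⟩
            intro z hz
            rw [Walk.support_concat] at hz
            rcases List.mem_append.mp hz with h | h
            · exact hpHT z h
            · simp at h; exact h ▸ ⟨hnbH y hy, hyT⟩
          have := hmax (n + 1) hPs
          omega
        have hyℓ : y ≠ ℓ := fun h => G.irrefl (h ▸ hy)
        set q1 := p.takeUntil y hyp with hq1
        set q2 := p.dropUntil y hyp with hq2
        have hspec : q1.append q2 = p := p.take_spec hyp
        -- ℓ ∉ q1.support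
        have hnd : (q1.support ++ q2.support.tail).Nodup := by
          rw [← Walk.support_append, hspec]
          exact hp.support_nodup
        have hℓq2t : ℓ ∈ q2.support.tail := by
          have h1 : ℓ ∈ q2.support := q2.end_mem_support
          rw [q2.support_eq_cons] at h1
          rcases List.mem_cons.mp h1 with h | h
          · exact absurd h.symm hyℓ
          · exact h
        have hℓq1 : ℓ ∉ q1.support := fun h =>
          (List.disjoint_of_nodup_append hnd) h hℓq2t
        have hQ : (q1.concat hy.symm).IsPath :=
          isPath_concat (hp.takeUntil hyp) hy.symm hℓq1
        have hsupp := support_eq_of_acyclic hac p (q1.concat hy.symm) hp hQ hpH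
          (by
            intro x hx
            rw [Walk.support_concat] at hx
            rcases List.mem_append.mp hx with h | h
            · exact hpH x (Walk.support_takeUntil_subset p hyp h)
            · simp at h; exact h ▸ hℓH)
        rw [Walk.support_concat, ← hspec,
          Walk.support_append] at hsupp
        have htail : q2.support.tail = [ℓ] := List.append_cancel_left hsupp
        have hq2s : q2.support = [y, ℓ] := by rw [q2.support_eq_cons, htail]
        have hq2len : q2.length = 1 := by
          have := q2.length_support
          rw [hq2s] at this
          simpa using this.symm
        have hq1len : q1.length = n - 1 := by
          have := congrArg Walk.length hspec
          rw [Walk.length_append, hplen, hq2len] at this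
          omega
        have : p.getVert q1.length = y := by
          conv_lhs => rw [← hspec]
          rw [Walk.getVert_append]
          simp
        rw [← hq1len, this]
      intro y z hy hz
      rw [hcanon y hy, hcanon z hz]
  -- ℓ has exactly one neighbor, contradicting its degree
  have hnonnil : ¬ p.Nil ∨ n = 0 := by
    rcases Nat.eq_zero_or_pos n with h | h
    · exact Or.inr h
    · exact Or.inl (by rw [Walk.nil_iff_length_eq, hplen]; omega)
  obtain ⟨w₀, hw₀⟩ : ∃ w₀, G.Adj ℓ w₀ := by
    rcases Nat.eq_zero_or_pos n with h | h
    · have hls : s = ℓ := Walk.eq_of_length_eq_zero (hplen.trans h)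
      exact ⟨t₀, hls ▸ hadj⟩
    · refine ⟨p.getVert (n - 1), ?_⟩
      have := p.adj_getVert_succ (i := n - 1) (by omega)
      rw [show n - 1 + 1 = n from by omega, ← hplen, Walk.getVert_length] at this
      rw [hplen] at this
      exact this.symm
  have hset : G.neighborSet ℓ = {w₀} := by
    ext z
    simp only [mem_neighborSet, Set.mem_singleton_iff]
    exact ⟨fun hz => key z w₀ hz hw₀, fun hz => hz ▸ hw₀⟩
  have : degOf G ℓ = 1 := by rw [degOf, hset, Set.ncard_singleton]
  exact hdeg ℓ hℓT this


lemma escape_disjoint (hac : (G.induce H).IsAcyclic)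
    (hTconn : (G.induce T).Connected) (hTH : T ⊆ H)
    {s s' x x' : V} (hss' : s ≠ s') (hsT : s ∉ T) (hs'T : s' ∉ T)
    {t t' : V} (ht : t ∈ T) (ht' : t' ∈ T) (hst : G.Adj s t) (hs't' : G.Adj s' t')
    (p : G.Walk s x) (p' : G.Walk s' x') (hp : p.IsPath) (hp' : p'.IsPath)
    (hpH : ∀ y ∈ p.support, y ∈ H ∧ y ∉ T) (hp'H : ∀ y ∈ p'.support, y ∈ H ∧ y ∉ T) :
    ∀ y, y ∈ p.support → y ∈ p'.support → False := by
  classical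
  intro y hy hy'
  set U : G.Walk s s' := (p.takeUntil y hy).append (p'.takeUntil y hy').reverse with hU
  have hUsub : ∀ z ∈ U.support, z ∈ H ∧ z ∉ T := by
    intro z hz
    rw [hU, Walk.mem_support_append_iff] at hz
    rcases hz with h | h
    · exact hpH z (Walk.support_takeUntil_subset p hy h)
    · rw [Walk.support_reverse, List.mem_reverse] at h
      exact hp'H z (Walk.support_takeUntil_subset p' hy' h)
  set W := U.toPath with hW
  have hWsub : ∀ z ∈ (W : G.Walk s s').support, z ∈ H ∧ z ∉ T :=
    fun z hz => hUsub z (Walk.support_toPath_subset U hz)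
  obtain ⟨w, hw, hwT, htw⟩ := through_T hTconn hsT hs'T hss' ht ht' hst hs't'.symm
  have hsupp := support_eq_of_acyclic hac (W : G.Walk s s') w W.2 hw
    (fun z hz => (hWsub z hz).1)
    (by
      intro z hz
      rcases hwT z hz with h | rfl | rfl
      · exact hTH h
      · exact (hpH _ p.start_mem_support).1
      · exact (hp'H _ p'.start_mem_support).1)
  rw [← hsupp] at htw
  exact (hWsub t htw).2 ht

end

end Helpers

/-- in an almost leafless instance with `|N_G(T)| > k(k+1)`, for every
`k`-secluded supertree `H` of `F` in `G` there exists a vertex `v ∈ N_G(H)` (hence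
`v ∉ F`) together with `k+2` paths from `N_G(T)` to `v` avoiding `T` and pairwise
intersecting only in `v`. -/
theorem exists_flower_vertex [Fintype V] (G : SimpleGraph V) (k : ℕ)
    (T F : Set V) (hTF : T ⊆ F) (hT : T.Nonempty)
    (hTconn : (G.induce T).Connected)
    (hleaf : ∀ u : V, degOf G u = 1 → F = {u})
    (hbig : k * (k + 1) < (openNbhd G T).ncard)
    (H : Set V) (hH : H ∈ secl G k F) :
    ∃ v ∈ openNbhd G H, v ∉ F ∧
      ∃ (s : Fin (k + 2) → V) (P : (i : Fin (k + 2)) → G.Walk (s i) v),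
        (∀ i, s i ∈ openNbhd G T) ∧
        (∀ i, (P i).IsPath) ∧
        (∀ i, ∀ x ∈ (P i).support, x ∉ T) ∧
        (∀ i j, i ≠ j → ∀ x, x ∈ (P i).support → x ∈ (P j).support → x = v) := by
  classical
  obtain ⟨⟨htree, hk⟩, hFH⟩ := hH
  have hTH : T ⊆ H := hTF.trans hFH
  have hac : (G.induce H).IsAcyclic := htree.IsAcyclic
  have hdeg : ∀ x, x ∉ T → degOf G x ≠ 1 := by
    intro x hx h1
    obtain ⟨t, ht⟩ := hT
    have hFx := hleaf x h1
    have : t ∈ ({x} : Set V) := hFx ▸ hTF ht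
    rw [Set.mem_singleton_iff] at this
    exact hx (this ▸ ht)
  set NT := openNbhd G T with hNT
  set NH := openNbhd G H with hNH
  set S₀ : Set V := NT ∩ H with hS₀
  -- escape data for each s ∈ S₀
  have hesc : ∀ s : S₀, ∃ ℓ v, ∃ p : G.Walk (s : V) ℓ, p.IsPath ∧
      (∀ x ∈ p.support, x ∈ H ∧ x ∉ T) ∧ G.Adj ℓ v ∧ v ∉ H := by
    rintro ⟨s, ⟨hsT, t, htT, hadj⟩, hsH⟩
    exact exists_escape hac hTconn hTH hdeg hsH hsT t htT hadj
  choose ℓf vf Pf hPath hSupp hAdj hvH using hesc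
  have htw : ∀ s : S₀, ∃ t ∈ T, G.Adj (s : V) t := fun s => s.2.1.2
  choose tf htfT htfAdj using htw
  set g : V → V := fun x => if h : x ∈ S₀ then vf ⟨x, h⟩ else x with hg
  have hgNH : ∀ x (h : x ∈ S₀), g x ∈ NH := by
    intro x h
    refine ⟨by simp only [hg, dif_pos h]; exact hvH ⟨x, h⟩, ℓf ⟨x, h⟩,
      (hSupp ⟨x, h⟩ _ (Pf ⟨x, h⟩).end_mem_support).1, ?_⟩
    simp only [hg, dif_pos h]
    exact (hAdj ⟨x, h⟩).symm
  have hHfin : NH.Finite := Set.toFinite _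
  -- pigeonhole
  obtain ⟨v₀, hv₀NH, hfib⟩ : ∃ v₀ ∈ NH,
      k + 2 ≤ (S₀.toFinset.filter (fun x => g x = v₀)).card ∨
      (v₀ ∈ NT ∧ k + 1 ≤ (S₀.toFinset.filter (fun x => g x = v₀)).card) := by
    by_contra hcon
    push_neg at hcon
    have hcount : S₀.toFinset.card =
        ∑ v ∈ NH.toFinset, (S₀.toFinset.filter (fun x => g x = v)).card :=
      Finset.card_eq_sum_card_fiberwise (by
        intro x hx
        have hx' : x ∈ S₀ := by simpa using hx
        simpa using hgNH x hx')
    have hpoint : ∀ v ∈ NH.toFinset,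
        (S₀.toFinset.filter (fun x => g x = v)).card
          + (if v ∈ NT then 1 else 0) ≤ k + 1 := by
      intro v hv
      rw [Set.mem_toFinset] at hv
      obtain ⟨h1, h2⟩ := hcon v hv
      by_cases hvNT : v ∈ NT
      · simp only [hvNT, if_true]
        have := h2 hvNT
        omega
      · simp only [hvNT, if_false]
        omega
    have hsum : S₀.toFinset.card + (NH.toFinset.filter (· ∈ NT)).card
        ≤ (k + 1) * NH.toFinset.card := by
      rw [hcount, Finset.card_filter, ← Finset.sum_add_distrib]
      calc (∑ v ∈ NH.toFinset, ((S₀.toFinset.filter (fun x => g x = v)).card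
              + (if v ∈ NT then 1 else 0)))
          ≤ ∑ _v ∈ NH.toFinset, (k + 1) := Finset.sum_le_sum hpoint
        _ = (k + 1) * NH.toFinset.card := by rw [Finset.sum_const, smul_eq_mul,
              Nat.mul_comm]
    have hNHcard : NH.toFinset.card = NH.ncard := (Set.ncard_eq_toFinset_card' NH).symm
    have hS₀card : S₀.toFinset.card = S₀.ncard := (Set.ncard_eq_toFinset_card' S₀).symm
    have hfilt : (NH.toFinset.filter (· ∈ NT)).card = (NT \ H).ncard := by
      have hset : NH.toFinset.filter (· ∈ NT) = (NT \ H).toFinset := by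
        ext x
        simp only [Finset.mem_filter, Set.mem_toFinset, Set.mem_diff]
        constructor
        · rintro ⟨⟨hxH, -⟩, hxNT⟩
          exact ⟨hxNT, hxH⟩
        · rintro ⟨hxNT, hxH⟩
          obtain ⟨hxT, u, huT, hadj⟩ := hxNT
          exact ⟨⟨hxH, u, hTH huT, hadj⟩, ⟨hxT, u, huT, hadj⟩⟩
      rw [hset, Set.ncard_eq_toFinset_card']
    have hsplit : (NT ∩ H).ncard + (NT \ H).ncard = NT.ncard :=
      Set.ncard_inter_add_ncard_diff_eq_ncard NT H (Set.toFinite _)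
    rw [hS₀card, hfilt] at hsum
    have : NT.ncard ≤ (k + 1) * NH.toFinset.card := by
      rw [← hsplit]
      exact le_trans (le_of_eq rfl) hsum
    have hNHk : NH.toFinset.card ≤ k := by rw [hNHcard]; exact hk
    have hfin : NT.ncard ≤ (k + 1) * k := this.trans (Nat.mul_le_mul_left _ hNHk)
    rw [Nat.mul_comm] at hfin
    exact absurd hbig (not_lt.mpr hfin)
  -- v₀ is the flower vertex
  have hv₀H : v₀ ∉ H := hv₀NH.1
  have hv₀T : v₀ ∉ T := fun h => hv₀H (hTH h)
  -- build a (k+2)-element finset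
  obtain ⟨c, hcsub, hccard⟩ : ∃ c : Finset V, c.card = k + 2 ∧
      ∀ x ∈ c, (x = v₀ ∧ v₀ ∈ NT) ∨ (∃ h : x ∈ S₀, vf ⟨x, h⟩ = v₀) := by
    rcases hfib with h | ⟨hv₀NT, h⟩
    · obtain ⟨c, hc, hcard⟩ := Finset.exists_subset_card_eq h
      refine ⟨c, hcard, fun x hx => Or.inr ?_⟩
      have := hc hx
      rw [Finset.mem_filter, Set.mem_toFinset] at this
      refine ⟨this.1, ?_⟩
      have h2 := this.2
      simp only [hg] at h2
      rwa [dif_pos this.1] at h2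
    · obtain ⟨c, hc, hcard⟩ := Finset.exists_subset_card_eq h
      have hv₀c : v₀ ∉ c := by
        intro hv₀c
        have := hc hv₀c
        rw [Finset.mem_filter, Set.mem_toFinset] at this
        exact hv₀H this.1.2
      refine ⟨insert v₀ c, by rw [Finset.card_insert_of_notMem hv₀c, hcard], ?_⟩
      intro x hx
      rcases Finset.mem_insert.mp hx with rfl | hx
      · exact Or.inl ⟨rfl, hv₀NT⟩
      · have := hc hx
        rw [Finset.mem_filter, Set.mem_toFinset] at this
        refine Or.inr ⟨this.1, ?_⟩
        have h2 := this.2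
        simp only [hg] at h2
        rwa [dif_pos this.1] at h2
  -- enumerate the k+2 sources
  set e : Fin (k + 2) → V := fun i => (c.equivFin.symm (Fin.cast hcsub.symm i) : V)
    with he
  have he_mem : ∀ i, e i ∈ c := fun i => (c.equivFin.symm (Fin.cast hcsub.symm i)).2
  have he_inj : Function.Injective e := by
    intro i j hij
    have := Subtype.val_injective hij
    have := c.equivFin.symm.injective this
    exact Fin.ext (by simpa using congrArg Fin.val this)
  have hQ : ∀ i, ∃ q : G.Walk (e i) v₀, (e i ∈ NT) ∧ q.IsPath ∧
      (∀ x ∈ q.support, x ∉ T) ∧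
      (∀ x ∈ q.support, x = v₀ ∨ ∃ hs : e i ∈ S₀, x ∈ (Pf ⟨e i, hs⟩).support) := by
    intro i
    rcases hccard (e i) (he_mem i) with ⟨heq, hNT'⟩ | ⟨hs, hv⟩
    · refine ⟨Walk.nil.copy heq.symm rfl, by rw [heq]; exact hNT', by simp, ?_, ?_⟩
      · intro x hx
        rw [Walk.support_copy, Walk.support_nil, List.mem_singleton] at hx
        exact hx ▸ hv₀T
      · intro x hx
        rw [Walk.support_copy, Walk.support_nil, List.mem_singleton] at hx
        exact Or.inl hx
    · have hnotin : vf ⟨e i, hs⟩ ∉ (Pf ⟨e i, hs⟩).support :=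
        fun hmem => hvH _ (hSupp _ _ hmem).1
      refine ⟨((Pf ⟨e i, hs⟩).concat (hAdj ⟨e i, hs⟩)).copy rfl hv,
        hs.1, ?_, ?_, ?_⟩
      · rw [Walk.isPath_copy]
        exact isPath_concat (hPath _) (hAdj _) hnotin
      · intro x hx
        rw [Walk.support_copy, Walk.support_concat] at hx
        rcases List.mem_append.mp hx with h | h
        · exact (hSupp _ _ h).2
        · rw [List.mem_singleton] at h
          exact h ▸ fun hT' => hvH ⟨e i, hs⟩ (hTH (hv ▸ hT'))
      · intro x hx
        rw [Walk.support_copy, Walk.support_concat] at hx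
        rcases List.mem_append.mp hx with h | h
        · exact Or.inr ⟨hs, h⟩
        · rw [List.mem_singleton] at h
          exact Or.inl (h.trans hv)
  choose Q hQ1 hQ2 hQ3 hQ4 using hQ
  refine ⟨v₀, hv₀NH, fun hF => hv₀H (hFH hF), e, Q, hQ1, hQ2, hQ3, ?_⟩
  intro i j hij x hxi hxj
  rcases hQ4 i x hxi with rfl | ⟨hsi, hxPi⟩
  · rfl
  rcases hQ4 j x hxj with rfl | ⟨hsj, hxPj⟩
  · rfl
  exfalso
  have hne : e i ≠ e j := fun h => hij (he_inj h)
  exact escape_disjoint hac hTconn hTH hne hsi.1.1 hsj.1.1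
    (htfT ⟨e i, hsi⟩) (htfT ⟨e j, hsj⟩) (htfAdj ⟨e i, hsi⟩) (htfAdj ⟨e j, hsj⟩)
    (Pf ⟨e i, hsi⟩) (Pf ⟨e j, hsj⟩) (hPath _) (hPath _) (hSupp _) (hSupp _)
    x hxPi hxPj


end Secluded
end

section
/- Let G be a finite simple graph with positive vertex weights w, let k ≥ 1 be an integer, let F ⊆ V(G) be nonempty, and let v ∈ V(G) \ F. Let 𝔛 be a set of descriptions for G − v such that 𝒯_{G−v}(𝔛) = maxset_w(secl_{G−v}^{k−1}(F)) and such that v ∈ N_G(H) for every H ∈ 𝒯_{G−v}(𝔛). Then 𝒯_G({(r, 𝒳 ∪ {{v}}) : (r, 𝒳) ∈ 𝔛}) = maxset_w({H ∈ secl_G^{k}(F) : v ∈ N_G(H)}). -/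
namespace Secluded

open SimpleGraph

variable {V : Type*}

lemma induce_gdelete_singleton (G : SimpleGraph V) {v : V} {S : Set V} (h : v ∉ S) :
    (gdelete G {v}).induce S = G.induce S := by
  ext ⟨x, hx⟩ ⟨y, hy⟩
  simp only [comap_adj, Function.Embedding.coe_subtype, gdelete]
  constructor
  · exact fun hh => hh.1
  · intro hh
    refine ⟨hh, ?_, ?_⟩ <;> simp only [Set.mem_singleton_iff] <;> rintro rfl <;>
      [exact h hx; exact h hy]

lemma isInducedTree_gdelete_iff (G : SimpleGraph V) {v : V} {S : Set V} (h : v ∉ S) :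
    IsInducedTree (gdelete G {v}) S ↔ IsInducedTree G S := by
  unfold IsInducedTree
  rw [induce_gdelete_singleton G h]

lemma openNbhd_gdelete (G : SimpleGraph V) {v : V} {S : Set V} (h : v ∉ S) :
    openNbhd (gdelete G {v}) S = openNbhd G S \ {v} := by
  ext u
  simp only [openNbhd, gdelete, Set.mem_setOf_eq, Set.mem_diff, Set.mem_singleton_iff]
  constructor
  · rintro ⟨hu, x, hxS, hadj, huv, hxv⟩
    exact ⟨⟨hu, x, hxS, hadj⟩, huv⟩
  · rintro ⟨⟨hu, x, hxS, hadj⟩, huv⟩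
    refine ⟨hu, x, hxS, hadj, huv, ?_⟩
    intro hxv; exact h (hxv ▸ hxS)

lemma v_not_mem_openNbhd_gdelete (G : SimpleGraph V) {v : V} {S : Set V} (h : v ∉ S) :
    v ∉ openNbhd (gdelete G {v}) S := by
  rw [openNbhd_gdelete G h]
  simp

lemma openNbhd_eq_union (G : SimpleGraph V) {v : V} {S : Set V} (h : v ∉ S)
    (hvN : v ∈ openNbhd G S) :
    openNbhd G S = openNbhd (gdelete G {v}) S ∪ {v} := by
  rw [openNbhd_gdelete G h, Set.diff_union_of_subset (Set.singleton_subset_iff.mpr hvN)]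

lemma ncard_openNbhd_eq [Fintype V] (G : SimpleGraph V) {v : V} {S : Set V} (h : v ∉ S)
    (hvN : v ∈ openNbhd G S) :
    (openNbhd G S).ncard = (openNbhd (gdelete G {v}) S).ncard + 1 := by
  rw [openNbhd_gdelete G h]
  exact (Set.ncard_diff_singleton_add_one hvN (Set.toFinite _)).symm

/-- combining step: if `𝔛` are descriptions for `G − v` describing exactly
the maximum-weight `(k−1)`-secluded supertrees of `F` in `G − v`, all of which have `v`
in their `G`-neighborhood, then adding the singleton part `{v}` to every description
describes exactly the maximum-weight `k`-secluded supertrees `H` of `F` in `G` with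
`v ∈ N_G(H)`. -/
theorem combine_descriptions [Fintype V] (G : SimpleGraph V) (w : V → ℕ)
    (hw : ∀ x : V, 0 < w x) (k : ℕ) (hk : 1 ≤ k)
    (F : Set V) (hF : F.Nonempty) (v : V) (hv : v ∉ F)
    (𝔛 : Set (V × Set (Set V)))
    (hdesc : ∀ D ∈ 𝔛, IsDescription (gdelete G {v}) D.1 D.2)
    (havoid : ∀ D ∈ 𝔛, D.1 ≠ v ∧ ∀ X ∈ D.2, v ∉ X)
    (hT : treesOf (gdelete G {v}) 𝔛 =
      maxset w {S ∈ secl (gdelete G {v}) (k - 1) F | v ∉ S})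
    (hvN : ∀ S ∈ treesOf (gdelete G {v}) 𝔛, v ∈ openNbhd G S) :
    treesOf G {E | ∃ D ∈ 𝔛, E = (D.1, D.2 ∪ {({v} : Set V)})} =
      maxset w {S ∈ secl G k F | v ∈ openNbhd G S} := by
  set Gv := gdelete G ({v} : Set V) with hGv
  set A : Set (Set V) := {S ∈ secl Gv (k - 1) F | v ∉ S} with hA
  set B : Set (Set V) := {S ∈ secl G k F | v ∈ openNbhd G S} with hB
  -- B = {S ∈ A | v ∈ openNbhd G S}
  have hBA : ∀ S : Set V, S ∈ B ↔ S ∈ A ∧ v ∈ openNbhd G S := by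
    intro S
    constructor
    · rintro ⟨⟨⟨htree, hcard⟩, hFS⟩, hvS⟩
      have hvnS : v ∉ S := hvS.1
      refine ⟨⟨⟨⟨(isInducedTree_gdelete_iff G hvnS).mpr htree, ?_⟩, hFS⟩, hvnS⟩, hvS⟩
      have h2 := ncard_openNbhd_eq G hvnS hvS
      rw [← hGv] at h2
      omega
    · rintro ⟨⟨⟨⟨htree, hcard⟩, hFS⟩, hvnS⟩, hvS⟩
      refine ⟨⟨⟨(isInducedTree_gdelete_iff G hvnS).mp htree, ?_⟩, hFS⟩, hvS⟩
      have h2 := ncard_openNbhd_eq G hvnS hvS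
      rw [← hGv] at h2
      omega
  have hBsubA : B ⊆ A := fun S hS => ((hBA S).mp hS).1
  -- treesOf G 𝔛' = treesOf Gv 𝔛
  have htrees : treesOf G {E | ∃ D ∈ 𝔛, E = (D.1, D.2 ∪ {({v} : Set V)})} = treesOf Gv 𝔛 := by
    ext C
    constructor
    · rintro ⟨htree, E, ⟨D, hD, rfl⟩, hr, hsub, hcards⟩
      -- v ∈ openNbhd G C
      have hvC : v ∈ openNbhd G C := by
        have h1 : (openNbhd G C ∩ {v}).ncard = 1 := hcards {v} (Or.inr rfl)
        have hne : (openNbhd G C ∩ {v}).Nonempty := by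
          rw [Set.nonempty_iff_ne_empty]
          intro he
          rw [he] at h1
          simp at h1
        obtain ⟨u, huN, huv⟩ := hne
        rw [Set.mem_singleton_iff] at huv
        exact huv ▸ huN
      have hvnC : v ∉ C := hvC.1
      refine ⟨(isInducedTree_gdelete_iff G hvnC).mpr htree, D, hD, hr, ?_, ?_⟩
      · intro u hu
        rw [openNbhd_gdelete G hvnC] at hu
        have := hsub hu.1
        rw [Set.sUnion_union, Set.sUnion_singleton] at this
        rcases this with h | h
        · exact h
        · exact absurd h hu.2
      · intro X hX
        have hvX : v ∉ X := (havoid D hD).2 X hX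
        have heq : openNbhd Gv C ∩ X = openNbhd G C ∩ X := by
          rw [openNbhd_gdelete G hvnC]
          ext u
          simp only [Set.mem_inter_iff, Set.mem_diff, Set.mem_singleton_iff]
          constructor
          · rintro ⟨⟨h1, _⟩, h2⟩; exact ⟨h1, h2⟩
          · rintro ⟨h1, h2⟩
            exact ⟨⟨h1, fun he => hvX (he ▸ h2)⟩, h2⟩
        rw [heq]
        exact hcards X (Or.inl hX)
    · rintro ⟨htree, D, hD, hr, hsub, hcards⟩
      have hvC : v ∈ openNbhd G C := hvN C ⟨htree, D, hD, hr, hsub, hcards⟩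
      have hvnC : v ∉ C := hvC.1
      have hvnN : v ∉ openNbhd Gv C := v_not_mem_openNbhd_gdelete G hvnC
      have hNeq : openNbhd G C = openNbhd Gv C ∪ {v} := openNbhd_eq_union G hvnC hvC
      refine ⟨(isInducedTree_gdelete_iff G hvnC).mp htree,
        (D.1, D.2 ∪ {({v} : Set V)}), ⟨D, hD, rfl⟩, hr, ?_, ?_⟩
      · rw [hNeq, Set.sUnion_union, Set.sUnion_singleton]
        exact Set.union_subset_union hsub (subset_refl _)
      · rintro X (hX | hX)
        · have hvX : v ∉ X := (havoid D hD).2 X hX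
          have heq : openNbhd G C ∩ X = openNbhd Gv C ∩ X := by
            rw [hNeq]
            ext u
            simp only [Set.mem_inter_iff, Set.union_singleton, Set.mem_insert_iff]
            constructor
            · rintro ⟨(rfl | h1), h2⟩
              · exact absurd h2 hvX
              · exact ⟨h1, h2⟩
            · rintro ⟨h1, h2⟩; exact ⟨Or.inr h1, h2⟩
          rw [heq]
          exact hcards X hX
        · rw [Set.mem_singleton_iff] at hX
          subst hX
          have : openNbhd G C ∩ {v} = {v} := by
            apply Set.eq_singleton_iff_unique_mem.mpr
            refine ⟨⟨hvC, rfl⟩, ?_⟩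
            rintro u ⟨_, rfl⟩; rfl
          rw [this, Set.ncard_singleton]
  rw [htrees, hT]
  -- maxset w A = maxset w B, given maxset w A ⊆ B ⊆ A
  have hMsub : maxset w A ⊆ B := by
    intro S hS
    have hST : S ∈ treesOf Gv 𝔛 := by rw [hT]; exact hS
    exact (hBA S).mpr ⟨hS.1, hvN S hST⟩
  ext S
  constructor
  · rintro ⟨hSA, hmax⟩
    exact ⟨hMsub ⟨hSA, hmax⟩, fun S' hS' => hmax S' (hBsubA hS')⟩
  · rintro ⟨hSB, hmax⟩
    have hSA : S ∈ A := hBsubA hSB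
    have hAne : A.Nonempty := ⟨S, hSA⟩
    obtain ⟨M, hM, hMmax⟩ := Set.exists_max_image A (weight w) (Set.toFinite A) hAne
    have hMB : M ∈ B := hMsub ⟨hM, hMmax⟩
    exact ⟨hSA, fun S' hS' => le_trans (hMmax S' hS') (hmax M hMB)⟩

end Secluded
end

section
/- Let G be a finite simple graph, let T ⊆ V(G) with G[T] connected, and let H be an induced subgraph of G that is a tree (connected and acyclic) with T ⊆ V(H). If a vertex v ∈ N_G(T) has at least two neighbors in T, then v ∈ N_G(H). -/
namespace Secluded

open SimpleGraph

variable {V : Type*}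

/-- if an induced tree `H` of `G` contains the connected set `T` and a
vertex `v ∈ N_G(T)` has at least two neighbors in `T`, then `v ∈ N_G(H)`. -/
theorem two_neighbors_forced [Fintype V] (G : SimpleGraph V)
    (T : Set V) (hTconn : (G.induce T).Connected)
    (H : Set V) (hH : IsInducedTree G H) (hTH : T ⊆ H)
    (v : V) (hv : v ∈ openNbhd G T)
    (h2 : 2 ≤ (G.neighborSet v ∩ T).ncard) :
    v ∈ openNbhd G H := by
  obtain ⟨hvT, -⟩ := hv
  obtain ⟨u₁, u₂, hu₁, hu₂, hne⟩ := (Set.one_lt_ncard_iff (Set.toFinite _)).mp h2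
  classical
  refine ⟨?_, u₁, hTH hu₁.2, hu₁.1⟩
  intro hvH
  -- map a walk in `G.induce T` from `u₁` to `u₂` into `G.induce H`
  let f : G.induce T →g G.induce H := ⟨fun x => ⟨x.1, hTH x.2⟩, fun {a b} h => h⟩
  obtain ⟨w⟩ := hTconn.preconnected ⟨u₁, hu₁.2⟩ ⟨u₂, hu₂.2⟩
  let w' := w.map f
  have hsup : ∀ x ∈ w'.support, x.1 ∈ T := by
    intro x hx
    rw [SimpleGraph.Walk.support_map, List.mem_map] at hx
    obtain ⟨y, -, rfl⟩ := hx
    exact y.2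
  set p := w'.toPath with hp
  have hvp : (⟨v, hvH⟩ : H) ∉ p.1.support := by
    intro hmem
    exact hvT (hsup _ (SimpleGraph.Walk.support_toPath_subset w' hmem))
  -- path 2: from `v` via `u₂` back along `p` to `u₁`, then reverse
  have e2 : (G.induce H).Adj ⟨v, hvH⟩ ⟨u₂, hTH hu₂.2⟩ := hu₂.1
  have e1 : (G.induce H).Adj ⟨u₁, hTH hu₁.2⟩ ⟨v, hvH⟩ := hu₁.1.symm
  have hq : (SimpleGraph.Walk.cons e2 p.1.reverse).IsPath := by
    rw [SimpleGraph.Walk.cons_isPath_iff]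
    refine ⟨p.2.reverse, ?_⟩
    rw [SimpleGraph.Walk.support_reverse, List.mem_reverse]
    exact hvp
  let q : (G.induce H).Path ⟨u₁, hTH hu₁.2⟩ ⟨v, hvH⟩ :=
    ⟨(SimpleGraph.Walk.cons e2 p.1.reverse).reverse, hq.reverse⟩
  have hsing := hH.IsAcyclic.path_unique (SimpleGraph.Path.singleton e1) q
  have hmem : (⟨u₂, hTH hu₂.2⟩ : H) ∈ (SimpleGraph.Path.singleton e1).1.support := by
    rw [hsing]
    show _ ∈ (SimpleGraph.Walk.cons e2 p.1.reverse).reverse.support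
    rw [SimpleGraph.Walk.support_reverse, List.mem_reverse,
      SimpleGraph.Walk.support_cons]
    exact List.mem_cons_of_mem _ (SimpleGraph.Walk.start_mem_support _)
  simp only [SimpleGraph.Path.singleton, SimpleGraph.Walk.support_cons,
    SimpleGraph.Walk.support_nil, List.mem_cons, List.mem_singleton,
    List.not_mem_nil] at hmem
  rcases hmem with h | h | h
  · exact hne (congrArg Subtype.val h).symm
  · have : u₂ = v := congrArg Subtype.val h
    exact hvT (this ▸ hu₂.2)
  · exact h

end Secluded
end

section
/- Let G be a finite simple graph and let v be a degree-1 vertex of G. If (r, 𝒳) is a description for the graph G − v, then (r, 𝒳) is also a description for G. That is, for every set S consisting of exactly one vertex from each X ∈ 𝒳, the connected component H' of G − S containing r is acyclic and satisfies N_G(H') = S. -/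
namespace Secluded

open SimpleGraph

variable {V : Type*}

section Helpers

open SimpleGraph Walk

variable {V : Type*}

lemma walk_not_mem {G : SimpleGraph V} {D : Set V} :
    ∀ {a b : V}, (gdelete G D).Walk a b → a ∉ D → b ∉ D
  | _, _, Walk.nil, ha => ha
  | _, _, Walk.cons h q, _ => walk_not_mem q h.2.2

lemma walk_from_isolated {G : SimpleGraph V} {v : V} {D : Set V} {a : V}
    (w : (gdelete (gdelete G {v}) D).Walk v a) (hva : v ≠ a) : False := by
  cases w with
  | nil => exact hva rfl
  | cons h q => exact h.1.2.1 rfl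

lemma mem_of_adj_leaf {G : SimpleGraph V} {v u : V} (hnv : G.neighborSet v = {u})
    {c : V} (h : G.Adj v c) : c = u := by
  have : c ∈ G.neighborSet v := h
  rw [hnv, Set.mem_singleton_iff] at this
  exact this

lemma reachable_delete_of_ne {G : SimpleGraph V} {v u : V} (hnv : G.neighborSet v = {u})
    {D : Set V} {b : V} (hb : b ≠ v) :
    ∀ n {a : V}, a ≠ v → ∀ w : (gdelete G D).Walk a b, w.length = n →
      (gdelete (gdelete G {v}) D).Reachable a b := by
  intro n
  induction n using Nat.strong_induction_on with
  | _ n ih =>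
    intro a ha w hl
    cases w with
    | nil => exact Reachable.refl _
    | @cons _ c _ h q =>
      simp only [Walk.length_cons] at hl
      by_cases hc : c = v
      · subst hc
        cases q with
        | nil => exact absurd rfl hb
        | @cons _ d _ h2 q2 =>
          simp only [Walk.length_cons] at hl
          have hau : a = u := mem_of_adj_leaf hnv h.1.symm
          have hdu : d = u := mem_of_adj_leaf hnv h2.1
          have hda : d = a := hdu.trans hau.symm
          subst hda
          exact ih q2.length (by omega) ha q2 rfl
      · have hadj : (gdelete (gdelete G {v}) D).Adj a c := ⟨⟨h.1, ha, hc⟩, h.2.1, h.2.2⟩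
        exact hadj.reachable.trans (ih q.length (by omega) hc q rfl)

lemma walk_from_leaf {G : SimpleGraph V} {v u : V} (hnv : G.neighborSet v = {u})
    {D : Set V} {a : V} (hva : v ≠ a) (w : (gdelete G D).Walk v a) :
    (gdelete G D).Adj v u ∧ (gdelete G D).Reachable u a := by
  cases w with
  | nil => exact absurd rfl hva
  | @cons _ c _ h q =>
    have hcu : c = u := mem_of_adj_leaf hnv h.1
    subst hcu
    exact ⟨h, q.reachable⟩

lemma first_edge_mem {G : SimpleGraph V} {v u : V} (hnv : G.neighborSet v = {u})
    {a : V} (hva : v ≠ a) (w : G.Walk v a) : s(v, u) ∈ w.edges := by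
  cases w with
  | nil => exact absurd rfl hva
  | @cons _ c _ h q =>
    have hcu : c = u := mem_of_adj_leaf hnv h
    subst hcu
    simp

lemma no_cycle_at_leaf {G : SimpleGraph V} {v u : V} (hnv : G.neighborSet v = {u})
    (c : G.Walk v v) (hc : c.IsCycle) : False := by
  cases c with
  | nil => exact hc.ne_nil rfl
  | @cons _ d _ h q =>
    have hdu : d = u := mem_of_adj_leaf hnv h
    have hvd : v ≠ d := G.ne_of_adj h
    have h1 : s(v, u) ∈ q.reverse.edges := first_edge_mem hnv hvd q.reverse
    rw [Walk.edges_reverse, List.mem_reverse] at h1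
    have hnd := hc.edges_nodup
    rw [Walk.edges_cons] at hnd
    rw [← hdu] at h1
    exact (List.nodup_cons.mp hnd).1 h1

def liftWalk {K : SimpleGraph V} {T : Set V} :
    {a b : V} → (p : K.Walk a b) → (∀ x ∈ p.support, x ∈ T) → (ha : a ∈ T) → (hb : b ∈ T) →
      (K.induce T).Walk ⟨a, ha⟩ ⟨b, hb⟩
  | _, _, Walk.nil, _, _, _ => Walk.nil
  | _, _, Walk.cons h q, hs, ha, hb =>
      Walk.cons (by exact h)
        (liftWalk q (fun x hx => hs x (by rw [Walk.support_cons]; exact List.mem_cons_of_mem _ hx))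
          (hs _ (by rw [Walk.support_cons]; exact List.mem_cons_of_mem _ q.start_mem_support)) hb)

lemma liftWalk_map {K : SimpleGraph V} {T : Set V} :
    ∀ {a b : V} (p : K.Walk a b) (hs : ∀ x ∈ p.support, x ∈ T) (ha : a ∈ T) (hb : b ∈ T),
      (liftWalk p hs ha hb).map (SimpleGraph.Embedding.induce T).toHom = p
  | _, _, Walk.nil, _, _, _ => rfl
  | _, _, Walk.cons h q, hs, ha, hb => by
      exact congrArg (Walk.cons h) (liftWalk_map q _ _ _)

end Helpers

/-- if `v` is a degree-1 vertex of `G`, then any description for `G − v`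
is also a description for `G`. -/

theorem description_of_delete_leaf [Fintype V] (G : SimpleGraph V)
    (v : V) (hdeg : degOf G v = 1)
    (r : V) (hr : r ≠ v) (𝒳 : Set (Set V)) (h𝒳 : ∀ X ∈ 𝒳, v ∉ X)
    (hd : IsDescription (gdelete G {v}) r 𝒳) :
    IsDescription G r 𝒳 := by
  obtain ⟨u, hnv⟩ := Set.ncard_eq_one.mp hdeg
  have hadj_vu : G.Adj v u := by
    rw [← SimpleGraph.mem_neighborSet, hnv]
    exact rfl
  have huv : u ≠ v := (G.ne_of_adj hadj_vu).symm
  obtain ⟨hd1, hd2, hd3⟩ := hd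
  refine ⟨hd1, hd2, fun S hSt => ?_⟩
  obtain ⟨hac, hnb⟩ := hd3 S hSt
  set G' := gdelete G {v} with hG'
  set H' := component G' S r with hH'def
  set H := component G S r with hHdef
  have hvS : v ∉ S := fun hv => by
    obtain ⟨X, hX, hvX⟩ := hSt.1 hv
    exact h𝒳 X hX hvX
  have hle : gdelete G' S ≤ gdelete G S := fun x y h => ⟨h.1.1, h.2.1, h.2.2⟩
  have hH'H : H' ⊆ H := fun x hx => Reachable.mono hle hx
  have hSnH' : ∀ s ∈ S, s ∉ H' := fun s hs => by
    rw [← hnb] at hs; exact hs.1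
  have hrH' : r ∈ H' := Reachable.refl r
  have hrS : r ∉ S := fun h => hSnH' r h hrH'
  have hHnS : ∀ x ∈ H, x ∉ S := fun x hx => walk_not_mem hx.some hrS
  have hHH' : ∀ x, x ≠ v → x ∈ H → x ∈ H' :=
    fun x hx h => reachable_delete_of_ne hnv hx h.some.length hr h.some rfl
  have hvH_iff : v ∈ H ↔ u ∈ H' := by
    constructor
    · intro h
      obtain ⟨hadj, hreach⟩ := walk_from_leaf hnv (fun e => hr e.symm) h.some.reverse
      exact (reachable_delete_of_ne hnv hr hreach.some.length huv hreach.some rfl).symm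
    · intro h
      have hune : u ∉ S := fun hs => hSnH' u hs h
      have hadj : (gdelete G S).Adj u v := ⟨hadj_vu.symm, hune, hvS⟩
      exact (Reachable.mono hle h).trans hadj.reachable
  constructor
  · intro a c hc
    classical
    have hinj := (SimpleGraph.Embedding.induce (G := G) H).injective
    set c1 := c.map (SimpleGraph.Embedding.induce (G := G) H).toHom with hc1def
    have hc1 : c1.IsCycle := hc.map hinj
    have hsup : ∀ x ∈ c1.support, x ∈ H := by
      intro x hx
      rw [hc1def, Walk.support_map] at hx
      obtain ⟨y, hy, rfl⟩ := List.mem_map.mp hx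
      exact y.2
    have hvsup : v ∉ c1.support := fun hv =>
      no_cycle_at_leaf hnv (c1.rotate v hv) (hc1.rotate hv)
    have hsup' : ∀ x ∈ c1.support, x ∈ H' :=
      fun x hx => hHH' x (fun e => hvsup (e ▸ hx)) (hsup x hx)
    have hedges : ∀ e ∈ c1.edges, e ∈ G'.edgeSet := by
      intro e he
      induction e using Sym2.ind with
      | _ x y =>
        have hxy : G.Adj x y := c1.adj_of_mem_edges he
        have hx : x ∈ c1.support := c1.fst_mem_support_of_mem_edges he
        have hy : y ∈ c1.support := c1.snd_mem_support_of_mem_edges he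
        refine ⟨hxy, fun hm => hvsup ?_, fun hm => hvsup ?_⟩
        · rw [← Set.mem_singleton_iff.mp hm]; exact hx
        · rw [← Set.mem_singleton_iff.mp hm]; exact hy
    set c3 := c1.transfer G' hedges with hc3def
    have hc3 : c3.IsCycle := hc1.transfer hedges
    have hsup3 : ∀ x ∈ c3.support, x ∈ H' := by
      rw [hc3def, Walk.support_transfer]; exact hsup'
    have haH' : (SimpleGraph.Embedding.induce (G := G) H).toHom a ∈ H' := hsup3 _ c3.start_mem_support
    have hc4 : ((liftWalk c3 hsup3 haH' haH').map
        (SimpleGraph.Embedding.induce (G := G') H').toHom).IsCycle := by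
      rw [liftWalk_map]; exact hc3
    exact hac _ ((Walk.map_isCycle_iff_of_injective
      (SimpleGraph.Embedding.induce (G := G') H').injective).mp hc4)
  · ext x
    constructor
    · rintro ⟨hxH, y, hyH, hxy⟩
      have hxv : x ≠ v := by
        rintro rfl
        have hyu : y = u := mem_of_adj_leaf hnv hxy
        subst hyu
        exact hxH (hvH_iff.mpr (hHH' y huv hyH))
      have hyv : y ≠ v := by
        rintro rfl
        have hxu : x = u := mem_of_adj_leaf hnv hxy.symm
        exact hxH (hxu ▸ hH'H (hvH_iff.mp hyH))
      have hyH' : y ∈ H' := hHH' y hyv hyH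
      have hxnH' : x ∉ H' := fun h => hxH (hH'H h)
      have hmem : x ∈ openNbhd G' H' :=
        ⟨hxnH', y, hyH', ⟨hxy, fun hm => hxv (Set.mem_singleton_iff.mp hm),
          fun hm => hyv (Set.mem_singleton_iff.mp hm)⟩⟩
      rwa [hnb] at hmem
    · intro hxS
      have hx' : x ∈ openNbhd G' H' := by rw [hnb]; exact hxS
      obtain ⟨hxnH', y, hyH', hxy⟩ := hx'
      exact ⟨fun hxH => hHnS x hxH hxS, y, hH'H hyH', hxy.1⟩

end Secluded
end
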